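/- Let f be a Borel-measurable function on [0,1]^d of bounded HK-variation, let μ be a normalized Borel measure on [0,1]^d, and let x_1,…,x_N be points in [0,1]^d. Then |(1/N)·Σ_{n=1}^N f(x_n) − ∫_{[0,1]^d} f dμ| ≤ V_HK(f) · D_N*(x_1,…,x_N;μ). -/

import Mathlib

open MeasureTheory Finset

noncomputable section

/-- The quasi-volume `Δ` of `f` over the box `[a,b]` in the coordinates of `S`;
the coordinates outside `S` are fixed according to the anchor point `p`. -/
def quasiVol {d : ℕ} (f : (Fin d → ℝ) → ℝ) (S : Finset (Fin d)) (p a b : Fin d → ℝ) : ℝ :=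
  ∑ T ∈ S.powerset, (-1 : ℝ) ^ T.card *
    f (fun i => if i ∈ S then (if i ∈ T then a i else b i) else p i)

/-- A grid (a partition generated by one-dimensional partitions of the sides) of the
box `[lo, hi]` in the coordinates of `S`. -/
structure Grid (d : ℕ) (S : Finset (Fin d)) (lo hi : Fin d → ℝ) where
  m : Fin d → ℕ
  t : Fin d → ℕ → ℝ
  mono : ∀ i ∈ S, ∀ j k : ℕ, j ≤ k → k ≤ m i → t i j ≤ t i k
  first : ∀ i ∈ S, t i 0 = lo i
  last : ∀ i ∈ S, t i (m i) = hi i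

/-- The sum, over all cells of a grid, of the absolute value of the quasi-volume of the cell. -/
def gridSum {d : ℕ} (f : (Fin d → ℝ) → ℝ) (S : Finset (Fin d)) (p lo hi : Fin d → ℝ)
    (G : Grid d S lo hi) : ℝ :=
  ∑ k ∈ Fintype.piFinset (fun i => Finset.range (if i ∈ S then G.m i else 1)),
    |quasiVol f S p (fun i => G.t i (k i)) (fun i => G.t i (k i + 1))|

/-- The variation in the sense of Vitali of `f` on the face of the box `[lo, hi]` with active
coordinates `S`, the remaining coordinates being fixed according to the anchor `p`:
the supremum of `gridSum` over all grids. -/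
def vitaliVar {d : ℕ} (f : (Fin d → ℝ) → ℝ) (S : Finset (Fin d)) (p lo hi : Fin d → ℝ) : ℝ :=
  sSup (Set.range (gridSum f S p lo hi))

/-- The Vitali variation on the face `(S, p)` of `[lo, hi]` is bounded (finite). -/
def BddVitali {d : ℕ} (f : (Fin d → ℝ) → ℝ) (S : Finset (Fin d)) (p lo hi : Fin d → ℝ) : Prop :=
  BddAbove (Set.range (gridSum f S p lo hi))

/-- Hardy–Krause-type variation of `f` on the box `[lo, hi]` with anchor `p`: the sum, over all
nonempty sets `S` of coordinates, of the Vitali variation of the restriction of `f` to the face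
of `[lo, hi]` whose coordinates outside `S` are fixed according to `p`. -/
def hkVarOn {d : ℕ} (f : (Fin d → ℝ) → ℝ) (p lo hi : Fin d → ℝ) : ℝ :=
  ∑ S ∈ (Finset.univ : Finset (Fin d)).powerset.erase ∅, vitaliVar f S p lo hi

/-- All the Vitali variations occurring in `hkVarOn` are bounded. -/
def BddHKVarOn {d : ℕ} (f : (Fin d → ℝ) → ℝ) (p lo hi : Fin d → ℝ) : Prop :=
  ∀ S ∈ (Finset.univ : Finset (Fin d)).powerset.erase ∅, BddVitali f S p lo hi

/-- The Hardy–Krause variation of `f` on `[0,1]^d`, anchored at `1`. -/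
def hkVar {d : ℕ} (f : (Fin d → ℝ) → ℝ) : ℝ := hkVarOn f 1 0 1

/-- `f` has bounded Hardy–Krause variation (anchored at `1`). -/
def BddHKVar {d : ℕ} (f : (Fin d → ℝ) → ℝ) : Prop := BddHKVarOn f 1 0 1

/-- The Hardy–Krause variation of `f` on the box `[0, a]`, anchored at `0`. -/
def hkVar0On {d : ℕ} (f : (Fin d → ℝ) → ℝ) (a : Fin d → ℝ) : ℝ := hkVarOn f 0 0 a

/-- The Hardy–Krause variation of `f` on `[0,1]^d`, anchored at `0`. -/
def hkVar0 {d : ℕ} (f : (Fin d → ℝ) → ℝ) : ℝ := hkVarOn f 0 0 1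

/-- `f` has bounded Hardy–Krause variation anchored at `0`. -/
def BddHKVar0 {d : ℕ} (f : (Fin d → ℝ) → ℝ) : Prop := BddHKVarOn f 0 0 1

/-- `f` is completely monotone: every quasi-volume of an axis-parallel box contained in a face
of `[0,1]^d` (coordinates outside the active set `S` being fixed at `0` or `1`) is nonnegative. -/
def CompletelyMonotone {d : ℕ} (f : (Fin d → ℝ) → ℝ) : Prop :=
  ∀ S : Finset (Fin d), S.Nonempty → ∀ p : Fin d → ℝ, (∀ i ∉ S, p i = 0 ∨ p i = 1) →
    ∀ a b : Fin d → ℝ, a ∈ Set.Icc (0 : Fin d → ℝ) 1 → b ∈ Set.Icc (0 : Fin d → ℝ) 1 →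
      a ≤ b → 0 ≤ quasiVol f S p a b

/-- `f` is coordinatewise right-continuous at every point of `[0,1]^d`. -/
def RightCts {d : ℕ} (f : (Fin d → ℝ) → ℝ) : Prop :=
  ∀ x ∈ Set.Icc (0 : Fin d → ℝ) 1, ∀ i : Fin d,
    Filter.Tendsto (fun y : ℝ => f (Function.update x i y))
      (nhdsWithin (x i) (Set.Icc (x i) 1)) (nhds (f x))

/-- The star-discrepancy of the points `x 1, …, x N` with respect to the measure `μ`. -/
def starDisc {d : ℕ} (N : ℕ) (x : Fin N → Fin d → ℝ) (μ : Measure (Fin d → ℝ)) : ℝ :=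
  ⨆ a : Set.Icc (0 : Fin d → ℝ) 1,
    |(∑ n : Fin N, Set.indicator (Set.Icc 0 (a : Fin d → ℝ)) (fun _ => (1 : ℝ)) (x n)) / N
      - (μ (Set.Icc 0 (a : Fin d → ℝ))).toReal|

set_option maxHeartbeats 1000000

namespace KH

variable {d : ℕ}

lemma quasiVol_congr (f : (Fin d → ℝ) → ℝ) {S : Finset (Fin d)} {p p' a a' b b' : Fin d → ℝ}
    (hp : ∀ i ∉ S, p i = p' i) (ha : ∀ i ∈ S, a i = a' i) (hb : ∀ i ∈ S, b i = b' i) :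
    quasiVol f S p a b = quasiVol f S p' a' b' := by
  unfold quasiVol
  refine Finset.sum_congr rfl fun T hT => ?_
  have : (fun i => if i ∈ S then (if i ∈ T then a i else b i) else p i)
      = (fun i => if i ∈ S then (if i ∈ T then a' i else b' i) else p' i) := by
    funext i
    by_cases hiS : i ∈ S
    · by_cases hiT : i ∈ T <;> simp [hiS, hiT, ha i hiS, hb i hiS]
    · simp [hiS, hp i hiS]
  rw [this]

lemma quasiVol_empty (f : (Fin d → ℝ) → ℝ) (p a b : Fin d → ℝ) :
    quasiVol f ∅ p a b = f p := by
  simp [quasiVol]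

lemma quasiVol_insert (f : (Fin d → ℝ) → ℝ) {S : Finset (Fin d)} {i : Fin d} (hi : i ∉ S)
    (p a b : Fin d → ℝ) :
    quasiVol f (insert i S) p a b
      = quasiVol f S (Function.update p i (b i)) a b
        - quasiVol f S (Function.update p i (a i)) a b := by
  unfold quasiVol
  rw [Finset.powerset_insert, Finset.sum_union, Finset.sum_image]
  · have h1 : ∀ T ∈ S.powerset,
        (-1 : ℝ) ^ T.card * f (fun l => if l ∈ insert i S then (if l ∈ T then a l else b l) else p l)
        = (-1 : ℝ) ^ T.card * f (fun l => if l ∈ S then (if l ∈ T then a l else b l)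
            else Function.update p i (b i) l) := by
      intro T hT
      rw [Finset.mem_powerset] at hT
      congr 2
      funext l
      by_cases hlS : l ∈ S
      · simp [hlS, Finset.mem_insert_of_mem hlS]
      · by_cases hli : l = i
        · subst hli
          have : l ∉ T := fun h => hi (hT h)
          simp [this, hi, Function.update_self]
        · simp [hlS, hli, Function.update_of_ne hli]
    have h2 : ∀ T ∈ S.powerset,
        (-1 : ℝ) ^ (insert i T).card
            * f (fun l => if l ∈ insert i S then (if l ∈ insert i T then a l else b l) else p l)
        = -((-1 : ℝ) ^ T.card * f (fun l => if l ∈ S then (if l ∈ T then a l else b l)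
            else Function.update p i (a i) l)) := by
      intro T hT
      rw [Finset.mem_powerset] at hT
      have hiT : i ∉ T := fun h => hi (hT h)
      rw [Finset.card_insert_of_notMem hiT, pow_succ]
      have : (fun l => if l ∈ insert i S then (if l ∈ insert i T then a l else b l) else p l)
          = (fun l => if l ∈ S then (if l ∈ T then a l else b l)
              else Function.update p i (a i) l) := by
        funext l
        by_cases hli : l = i
        · subst hli; simp [hi]
        · by_cases hlS : l ∈ S
          · simp [hlS, Finset.mem_insert_of_mem hlS, Finset.mem_insert, hli]
          · simp [hlS, hli, Finset.mem_insert, Function.update_of_ne hli]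
      rw [this]; ring
    rw [Finset.sum_congr rfl h1, Finset.sum_congr rfl h2, Finset.sum_neg_distrib]
    ring
  · intro T hT T' hT' h
    rw [Finset.mem_coe, Finset.mem_powerset] at hT hT'
    have : ∀ W : Finset (Fin d), W ⊆ S → (insert i W).erase i = W := fun W hW =>
      Finset.erase_insert (fun h => hi (hW h))
    rw [← this T hT, ← this T' hT', h]
  · rw [Finset.disjoint_left]
    intro T hT hT'
    rw [Finset.mem_powerset] at hT
    obtain ⟨W, hW, rfl⟩ := Finset.mem_image.mp hT'
    exact hi (hT (Finset.mem_insert_self i W))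

lemma quasiVol_eq_zero (f : (Fin d → ℝ) → ℝ) {S : Finset (Fin d)} {i : Fin d} (hiS : i ∈ S)
    {a b : Fin d → ℝ} (hab : a i = b i) (p : Fin d → ℝ) :
    quasiVol f S p a b = 0 := by
  have h := quasiVol_insert f (Finset.notMem_erase i S) p a b
  rw [Finset.insert_erase hiS] at h
  rw [h, hab, sub_self]

lemma quasiVol_comp_update (f : (Fin d → ℝ) → ℝ) {S : Finset (Fin d)} {i : Fin d} (hi : i ∉ S)
    (c : ℝ) (p a b : Fin d → ℝ) :
    quasiVol (fun w => f (Function.update w i c)) S p a b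
      = quasiVol f S (Function.update p i c) a b := by
  unfold quasiVol
  refine Finset.sum_congr rfl fun T hT => ?_
  rw [Finset.mem_powerset] at hT
  beta_reduce
  have : Function.update (fun l => if l ∈ S then (if l ∈ T then a l else b l) else p l) i c
      = (fun l => if l ∈ S then (if l ∈ T then a l else b l) else Function.update p i c l) := by
    funext l
    by_cases hli : l = i
    · subst hli; simp [hi, Function.update_self]
    · by_cases hlS : l ∈ S <;> simp [hlS, hli, Function.update_of_ne hli]
  rw [this]

lemma quasiVol_split (f : (Fin d → ℝ) → ℝ) {S : Finset (Fin d)} {i : Fin d} (hiS : i ∈ S)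
    (p a b : Fin d → ℝ) (c : ℝ) :
    quasiVol f S p a b
      = quasiVol f S p a (Function.update b i c) + quasiVol f S p (Function.update a i c) b := by
  have hi : i ∉ S.erase i := Finset.notMem_erase i S
  have hS : S = insert i (S.erase i) := (Finset.insert_erase hiS).symm
  rw [hS]
  rw [quasiVol_insert f hi p a b,
      quasiVol_insert f hi p a (Function.update b i c),
      quasiVol_insert f hi p (Function.update a i c) b]
  simp only [Function.update_self]
  have e1 : quasiVol f (S.erase i) (Function.update p i c) a
      (Function.update b i c) = quasiVol f (S.erase i) (Function.update p i c) a b := by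
    refine quasiVol_congr f (fun l hl => rfl) (fun l hl => rfl) (fun l hl => ?_)
    exact Function.update_of_ne (Finset.ne_of_mem_erase hl) c b
  have e2 : quasiVol f (S.erase i) (Function.update p i (a i)) a (Function.update b i c)
      = quasiVol f (S.erase i) (Function.update p i (a i)) a b := by
    refine quasiVol_congr f (fun l hl => rfl) (fun l hl => rfl) (fun l hl => ?_)
    exact Function.update_of_ne (Finset.ne_of_mem_erase hl) c b
  have e3 : quasiVol f (S.erase i) (Function.update p i (b i)) (Function.update a i c) b
      = quasiVol f (S.erase i) (Function.update p i (b i)) a b := by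
    refine quasiVol_congr f (fun l hl => rfl) (fun l hl => ?_) (fun l hl => rfl)
    exact Function.update_of_ne (Finset.ne_of_mem_erase hl) c a
  have e4 : quasiVol f (S.erase i) (Function.update p i c)
      (Function.update a i c) b = quasiVol f (S.erase i) (Function.update p i c) a b := by
    refine quasiVol_congr f (fun l hl => rfl) (fun l hl => ?_) (fun l hl => rfl)
    exact Function.update_of_ne (Finset.ne_of_mem_erase hl) c a
  rw [e1, e2, e3, e4]
  ring

end KH

namespace KH

variable {d : ℕ}

lemma sum_quasiVol_powerset (f : (Fin d → ℝ) → ℝ) (U : Finset (Fin d)) (a b : Fin d → ℝ)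
    (hab : ∀ l ∉ U, a l = b l) :
    ∑ S ∈ U.powerset, (-1 : ℝ) ^ S.card * quasiVol f S b a b = f a := by
  have key : ∀ S ∈ U.powerset, (-1 : ℝ) ^ S.card * quasiVol f S b a b
      = ∑ T ∈ S.powerset, (-1 : ℝ) ^ S.card * ((-1 : ℝ) ^ T.card
          * f (fun l => if l ∈ T then a l else b l)) := by
    intro S hS
    rw [Finset.mem_powerset] at hS
    unfold quasiVol
    rw [Finset.mul_sum]
    refine Finset.sum_congr rfl fun T hT => ?_
    rw [Finset.mem_powerset] at hT
    congr 3
    funext l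
    by_cases hlS : l ∈ S
    · simp [hlS]
    · have : l ∉ T := fun h => hlS (hT h)
      simp [hlS, this]
  rw [Finset.sum_congr rfl key]
  rw [Finset.sum_comm' (s' := fun T => U.powerset.filter (fun S => T ⊆ S)) (t' := U.powerset)
    (by
      intro S T
      simp only [Finset.mem_powerset, Finset.mem_filter]
      constructor
      · rintro ⟨h1, h2⟩; exact ⟨⟨h1, h2⟩, h2.trans h1⟩
      · rintro ⟨⟨h1, h2⟩, h3⟩; exact ⟨h1, h2⟩)]
  have inner : ∀ T ∈ U.powerset,
      ∑ S ∈ U.powerset.filter (fun S => T ⊆ S),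
        (-1 : ℝ) ^ S.card * ((-1 : ℝ) ^ T.card * f (fun l => if l ∈ T then a l else b l))
      = (if U = T then 1 else 0) * f (fun l => if l ∈ T then a l else b l) := by
    intro T hT
    rw [Finset.mem_powerset] at hT
    have reind : ∑ S ∈ U.powerset.filter (fun S => T ⊆ S), (-1 : ℝ) ^ S.card
        = ∑ R ∈ (U \ T).powerset, (-1 : ℝ) ^ (T ∪ R).card := by
      refine Finset.sum_nbij' (fun S => S \ T) (fun R => T ∪ R) ?_ ?_ ?_ ?_ ?_
      · intro S hS
        rw [Finset.mem_filter, Finset.mem_powerset] at hS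
        rw [Finset.mem_powerset]
        exact Finset.sdiff_subset_sdiff hS.1 (Finset.Subset.refl T)
      · intro R hR
        rw [Finset.mem_powerset] at hR
        rw [Finset.mem_filter, Finset.mem_powerset]
        exact ⟨Finset.union_subset hT ((hR.trans (Finset.sdiff_subset))),
          Finset.subset_union_left⟩
      · intro S hS
        rw [Finset.mem_filter] at hS
        show T ∪ (S \ T) = S
        exact Finset.union_sdiff_of_subset hS.2
      · intro R hR
        rw [Finset.mem_powerset] at hR
        have hd : Disjoint T R := by
          refine Finset.disjoint_left.mpr fun l hlT hlR => ?_
          exact (Finset.mem_sdiff.mp (hR hlR)).2 hlT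
        show (T ∪ R) \ T = R
        rw [Finset.union_sdiff_cancel_left hd]
      · intro S hS
        rw [Finset.mem_filter] at hS
        beta_reduce
        rw [Finset.union_sdiff_of_subset hS.2]
    rw [← Finset.sum_mul, reind]
    have expand : ∑ R ∈ (U \ T).powerset, (-1 : ℝ) ^ (T ∪ R).card
        = (-1 : ℝ) ^ T.card * ∑ R ∈ (U \ T).powerset, (-1 : ℝ) ^ R.card := by
      rw [Finset.mul_sum]
      refine Finset.sum_congr rfl fun R hR => ?_
      rw [Finset.mem_powerset] at hR
      have hd : Disjoint T R := by
        refine Finset.disjoint_left.mpr fun l hlT hlR => ?_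
        exact (Finset.mem_sdiff.mp (hR hlR)).2 hlT
      rw [Finset.card_union_of_disjoint hd, pow_add]
    have hreal : ∑ R ∈ (U \ T).powerset, (-1 : ℝ) ^ R.card
        = if U \ T = ∅ then 1 else 0 := by
      have hz := Finset.sum_powerset_neg_one_pow_card (x := U \ T)
      have : ((∑ m ∈ (U \ T).powerset, (-1 : ℤ) ^ m.card : ℤ) : ℝ)
          = ∑ R ∈ (U \ T).powerset, (-1 : ℝ) ^ R.card := by push_cast; rfl
      rw [← this, hz]
      split <;> norm_num
    rw [expand, hreal]
    have hUT : (U \ T = ∅) ↔ U = T := by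
      rw [Finset.sdiff_eq_empty_iff_subset]
      exact ⟨fun h => Finset.Subset.antisymm h hT, fun h => h ▸ Finset.Subset.refl U⟩
    by_cases h : U = T
    · rw [if_pos (hUT.mpr h), if_pos h, mul_one, one_mul, ← mul_assoc, ← pow_add,
        ← two_mul, pow_mul]
      norm_num
    · rw [if_neg (fun he => h (hUT.mp he)), if_neg h]
      ring
  rw [Finset.sum_congr rfl inner]
  rw [Finset.sum_eq_single_of_mem U (Finset.mem_powerset_self U)
    (fun T _ hT => by rw [if_neg (fun h => hT h.symm), zero_mul])]
  rw [if_pos rfl, one_mul]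
  congr 1
  funext l
  by_cases hl : l ∈ U
  · simp [hl]
  · simp [hl, hab l hl]

lemma piFinset_singleton_eq (g : Fin d → ℕ) :
    Fintype.piFinset (fun l => ({g l} : Finset ℕ)) = {g} := by
  ext k
  simp [Fintype.mem_piFinset, funext_iff]

lemma sum_piFinset_split (i : Fin d) (F : Fin d → Finset ℕ) (φ : (Fin d → ℕ) → ℝ) :
    ∑ k ∈ Fintype.piFinset F, φ k
      = ∑ c ∈ F i, ∑ k ∈ Fintype.piFinset (Function.update F i {c}), φ k := by
  have hcover : Fintype.piFinset F
      = (F i).biUnion (fun c => Fintype.piFinset (Function.update F i {c})) := by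
    ext k
    simp only [Fintype.mem_piFinset, Finset.mem_biUnion]
    constructor
    · intro h
      refine ⟨k i, h i, fun l => ?_⟩
      by_cases hl : l = i
      · subst hl; simp [Function.update_self]
      · simpa [Function.update_of_ne hl] using h l
    · rintro ⟨c, hc, h⟩ l
      by_cases hl : l = i
      · subst hl
        have := h l
        rw [Function.update_self] at this
        rw [Finset.mem_singleton] at this
        rw [this]; exact hc
      · simpa [Function.update_of_ne hl] using h l
  rw [hcover, Finset.sum_biUnion]
  intro c hc c' hc' hcc'
  simp only [Function.onFun]
  refine Finset.disjoint_left.mpr fun k hk hk' => ?_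
  rw [Fintype.mem_piFinset] at hk hk'
  have h1 := hk i
  have h2 := hk' i
  rw [Function.update_self, Finset.mem_singleton] at h1 h2
  exact hcc' (h1 ▸ h2 ▸ rfl)

lemma telescope_Ico (G : ℕ → ℝ) {j m : ℕ} (h : j ≤ m) :
    ∑ c ∈ Finset.Ico j m, (G (c + 1) - G c) = G m - G j := by
  induction m, h using Nat.le_induction with
  | base => simp
  | succ n hn ih =>
    rw [Finset.sum_Ico_succ_top (by omega), ih]
    ring

end KH

namespace KH

variable {d : ℕ}

lemma qv_subdiv (f : (Fin d → ℝ) → ℝ) (S : Finset (Fin d)) (p : Fin d → ℝ)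
    (t : Fin d → ℕ → ℝ) (j m : Fin d → ℕ) :
    (∀ i ∈ S, j i ≤ m i) →
    quasiVol f S p (fun i => t i (j i)) (fun i => t i (m i))
      = ∑ k ∈ Fintype.piFinset (fun l => if l ∈ S then Finset.Ico (j l) (m l) else ({j l} : Finset ℕ)),
          quasiVol f S p (fun l => t l (k l)) (fun l => t l (k l + 1)) := by
  induction S using Finset.induction_on generalizing p with
  | empty =>
    intro hjm
    have hfam : (fun l => if l ∈ (∅ : Finset (Fin d)) then Finset.Ico (j l) (m l)
        else ({j l} : Finset ℕ)) = fun l => ({j l} : Finset ℕ) := by funext l; simp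
    rw [hfam, piFinset_singleton_eq, Finset.sum_singleton, quasiVol_empty, quasiVol_empty]
  | @insert i S hi ih =>
    intro hjm
    have hjm' : ∀ l ∈ S, j l ≤ m l := fun l hl => hjm l (Finset.mem_insert_of_mem hl)
    have hji : j i ≤ m i := hjm i (Finset.mem_insert_self i S)
    have hQ : ∀ y : ℕ,
        quasiVol f S (Function.update p i (t i y)) (fun l => t l (j l)) (fun l => t l (m l))
        = ∑ k ∈ Fintype.piFinset (fun l => if l ∈ S then Finset.Ico (j l) (m l) else ({j l} : Finset ℕ)),
            quasiVol f S (Function.update p i (t i y)) (fun l => t l (k l)) (fun l => t l (k l + 1)) :=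
      fun y => ih (Function.update p i (t i y)) hjm'
    have tele : quasiVol f (insert i S) p (fun l => t l (j l)) (fun l => t l (m l))
        = ∑ c ∈ Finset.Ico (j i) (m i),
            (quasiVol f S (Function.update p i (t i (c+1))) (fun l => t l (j l)) (fun l => t l (m l))
             - quasiVol f S (Function.update p i (t i c)) (fun l => t l (j l)) (fun l => t l (m l))) := by
      rw [quasiVol_insert f hi]
      beta_reduce
      exact (telescope_Ico (fun y => quasiVol f S (Function.update p i (t i y))
        (fun l => t l (j l)) (fun l => t l (m l))) hji).symm
    rw [tele]
    have congr1 : ∀ c ∈ Finset.Ico (j i) (m i),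
        (quasiVol f S (Function.update p i (t i (c+1))) (fun l => t l (j l)) (fun l => t l (m l))
          - quasiVol f S (Function.update p i (t i c)) (fun l => t l (j l)) (fun l => t l (m l)))
        = ∑ k ∈ Fintype.piFinset (fun l => if l ∈ S then Finset.Ico (j l) (m l) else ({j l} : Finset ℕ)),
            quasiVol f (insert i S) p (fun l => t l (Function.update k i c l))
              (fun l => t l (Function.update k i c l + 1)) := by
      intro c _
      rw [hQ (c+1), hQ c, ← Finset.sum_sub_distrib]
      refine Finset.sum_congr rfl fun k hk => ?_
      rw [quasiVol_insert f hi]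
      beta_reduce
      rw [Function.update_self]
      have hnoteq : ∀ l ∈ S, Function.update k i c l = k l := fun l hl =>
        Function.update_of_ne (ne_of_mem_of_not_mem hl hi) c k
      have ea : quasiVol f S (Function.update p i (t i (c+1)))
          (fun l => t l (Function.update k i c l)) (fun l => t l (Function.update k i c l + 1))
          = quasiVol f S (Function.update p i (t i (c+1)))
            (fun l => t l (k l)) (fun l => t l (k l + 1)) :=
        quasiVol_congr f (fun _ _ => rfl) (fun l hl => by rw [hnoteq l hl])
          (fun l hl => by rw [hnoteq l hl])
      have eb : quasiVol f S (Function.update p i (t i c))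
          (fun l => t l (Function.update k i c l)) (fun l => t l (Function.update k i c l + 1))
          = quasiVol f S (Function.update p i (t i c))
            (fun l => t l (k l)) (fun l => t l (k l + 1)) :=
        quasiVol_congr f (fun _ _ => rfl) (fun l hl => by rw [hnoteq l hl])
          (fun l hl => by rw [hnoteq l hl])
      rw [ea, eb]
    rw [Finset.sum_congr rfl congr1]
    rw [sum_piFinset_split i
      (fun l => if l ∈ insert i S then Finset.Ico (j l) (m l) else ({j l} : Finset ℕ))
      (fun k => quasiVol f (insert i S) p (fun l => t l (k l)) (fun l => t l (k l + 1)))]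
    simp only [Finset.mem_insert_self, if_true]
    refine Finset.sum_congr rfl fun c hc => ?_
    refine Finset.sum_nbij' (fun k => Function.update k i c)
      (fun k' => Function.update k' i (j i)) ?_ ?_ ?_ ?_ ?_
    · intro k hk
      rw [Fintype.mem_piFinset] at hk ⊢
      intro l
      beta_reduce
      by_cases hl : l = i
      · subst hl
        simp [Function.update_self]
      · rw [Function.update_of_ne hl, Function.update_of_ne hl]
        have := hk l
        by_cases hlS : l ∈ S
        · simpa [hlS, Finset.mem_insert_of_mem hlS] using this
        · have hlin : l ∉ insert i S := by
            rw [Finset.mem_insert]; push_neg; exact ⟨hl, hlS⟩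
          simpa [hlS, hlin] using this
    · intro k' hk'
      rw [Fintype.mem_piFinset] at hk' ⊢
      intro l
      beta_reduce
      by_cases hl : l = i
      · subst hl
        simp [Function.update_self, hi, hji]
      · rw [Function.update_of_ne hl]
        have := hk' l
        rw [Function.update_of_ne hl] at this
        by_cases hlS : l ∈ S
        · simpa [hlS, Finset.mem_insert_of_mem hlS] using this
        · have hlin : l ∉ insert i S := by
            rw [Finset.mem_insert]; push_neg; exact ⟨hl, hlS⟩
          simpa [hlS, hlin] using this
    · intro k hk
      rw [Fintype.mem_piFinset] at hk
      have hki : k i = j i := by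
        have := hk i
        simpa [hi] using this
      beta_reduce
      rw [Function.update_idem, ← hki, Function.update_eq_self]
    · intro k' hk'
      rw [Fintype.mem_piFinset] at hk'
      have hki : k' i = c := by
        have := hk' i
        simpa [Function.update_self] using this
      beta_reduce
      rw [Function.update_idem, ← hki, Function.update_eq_self]
    · intro k hk
      rfl

end KH

namespace KH

variable {d : ℕ}

/-- cell sum of a raw grid datum -/
def cellSum (f : (Fin d → ℝ) → ℝ) (S : Finset (Fin d)) (p : Fin d → ℝ)
    (m : Fin d → ℕ) (t : Fin d → ℕ → ℝ) : ℝ :=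
  ∑ k ∈ Fintype.piFinset (fun l => if l ∈ S then Finset.range (m l) else ({0} : Finset ℕ)),
    |quasiVol f S p (fun l => t l (k l)) (fun l => t l (k l + 1))|

def IsGrid (S : Finset (Fin d)) (lo hi : Fin d → ℝ) (m : Fin d → ℕ) (t : Fin d → ℕ → ℝ) : Prop :=
  (∀ i ∈ S, ∀ j k : ℕ, j ≤ k → k ≤ m i → t i j ≤ t i k) ∧
  (∀ i ∈ S, t i 0 = lo i) ∧ (∀ i ∈ S, t i (m i) = hi i)

lemma cellSum_nonneg (f : (Fin d → ℝ) → ℝ) (S : Finset (Fin d)) (p : Fin d → ℝ)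
    (m : Fin d → ℕ) (t : Fin d → ℕ → ℝ) : 0 ≤ cellSum f S p m t :=
  Finset.sum_nonneg fun _ _ => abs_nonneg _

lemma gridSum_eq_cellSum (f : (Fin d → ℝ) → ℝ) (S : Finset (Fin d)) (p lo hi : Fin d → ℝ)
    (G : Grid d S lo hi) : gridSum f S p lo hi G = cellSum f S p G.m G.t := by
  unfold gridSum cellSum
  have hfam : (fun i => Finset.range (if i ∈ S then G.m i else 1))
      = (fun l => if l ∈ S then Finset.range (G.m l) else ({0} : Finset ℕ)) := by
    funext l
    by_cases hl : l ∈ S <;> simp [hl, Finset.range_one]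
  rw [hfam]

lemma cellSum_le_vitaliVar (f : (Fin d → ℝ) → ℝ) (S : Finset (Fin d)) (p lo hi : Fin d → ℝ)
    {m : Fin d → ℕ} {t : Fin d → ℕ → ℝ} (hG : IsGrid S lo hi m t)
    (hbdd : BddAbove (Set.range (gridSum f S p lo hi))) :
    cellSum f S p m t ≤ vitaliVar f S p lo hi := by
  have : cellSum f S p m t ∈ Set.range (gridSum f S p lo hi) :=
    ⟨⟨m, t, hG.1, hG.2.1, hG.2.2⟩, gridSum_eq_cellSum f S p lo hi ⟨m, t, hG.1, hG.2.1, hG.2.2⟩⟩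
  exact le_csSup hbdd this

lemma vitaliVar_le (f : (Fin d → ℝ) → ℝ) (S : Finset (Fin d)) (p lo hi : Fin d → ℝ) {C : ℝ}
    (hne : Nonempty (Grid d S lo hi)) (h : ∀ G : Grid d S lo hi, gridSum f S p lo hi G ≤ C) :
    vitaliVar f S p lo hi ≤ C := by
  refine csSup_le ?_ ?_
  · obtain ⟨G⟩ := hne
    exact ⟨gridSum f S p lo hi G, ⟨G, rfl⟩⟩
  · rintro y ⟨G, rfl⟩
    exact h G

lemma mono_of_step {s : ℕ → ℝ} {M : ℕ} (h : ∀ k, k < M → s k ≤ s (k + 1)) :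
    ∀ a b : ℕ, a ≤ b → b ≤ M → s a ≤ s b := by
  intro a b hab hbM
  induction b, hab using Nat.le_induction with
  | base => exact le_refl _
  | succ n hn ih => exact (ih (by omega)).trans (h n (by omega))

/-- trivial one-cell grid of `[lo, hi]` -/
lemma nonempty_grid (S : Finset (Fin d)) (lo hi : Fin d → ℝ) (hlohi : ∀ i ∈ S, lo i ≤ hi i) :
    Nonempty (Grid d S lo hi) := by
  refine ⟨⟨fun _ => 1, fun i k => if k = 0 then lo i else hi i, ?_, ?_, ?_⟩⟩
  · intro i hiS j k hjk hk1
    by_cases hj : j = 0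
    · by_cases hk : k = 0 <;> simp [hj, hk, hlohi i hiS]
    · have hk : k ≠ 0 := by omega
      simp [hj, hk]
  · intro i _; simp
  · intro i _; simp

/-- reindex of the inner cell-sum at a fixed coordinate -/
lemma inner_cell_reindex (f : (Fin d → ℝ) → ℝ) (S : Finset (Fin d)) (p : Fin d → ℝ)
    (l : Fin d) (F : Fin d → Finset ℕ) (t1 t2 : Fin d → ℕ → ℝ) (c1 c2 : ℕ)
    (h1 : t1 l c1 = t2 l c2) (h2 : t1 l (c1 + 1) = t2 l (c2 + 1))
    (ht : ∀ l', l' ≠ l → t1 l' = t2 l') :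
    ∑ k ∈ Fintype.piFinset (Function.update F l {c1}),
      |quasiVol f S p (fun v => t1 v (k v)) (fun v => t1 v (k v + 1))|
    = ∑ k ∈ Fintype.piFinset (Function.update F l {c2}),
      |quasiVol f S p (fun v => t2 v (k v)) (fun v => t2 v (k v + 1))| := by
  refine Finset.sum_nbij' (fun k => Function.update k l c2) (fun k => Function.update k l c1)
    ?_ ?_ ?_ ?_ ?_
  · intro k hk
    rw [Fintype.mem_piFinset] at hk ⊢
    intro v
    beta_reduce
    by_cases hv : v = l
    · subst hv; simp [Function.update_self]
    · rw [Function.update_of_ne hv, Function.update_of_ne hv]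
      have := hk v
      rwa [Function.update_of_ne hv] at this
  · intro k hk
    rw [Fintype.mem_piFinset] at hk ⊢
    intro v
    beta_reduce
    by_cases hv : v = l
    · subst hv; simp [Function.update_self]
    · rw [Function.update_of_ne hv, Function.update_of_ne hv]
      have := hk v
      rwa [Function.update_of_ne hv] at this
  · intro k hk
    rw [Fintype.mem_piFinset] at hk
    have : k l = c1 := by have := hk l; simpa using this
    beta_reduce
    rw [Function.update_idem, ← this, Function.update_eq_self]
  · intro k hk
    rw [Fintype.mem_piFinset] at hk
    have : k l = c2 := by have := hk l; simpa using this
    beta_reduce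
    rw [Function.update_idem, ← this, Function.update_eq_self]
  · intro k hk
    rw [Fintype.mem_piFinset] at hk
    have hkl : k l = c1 := by have := hk l; simpa using this
    congr 1
    refine quasiVol_congr f (fun _ _ => rfl) (fun v _ => ?_) (fun v _ => ?_)
    · beta_reduce
      by_cases hv : v = l
      · subst hv; rw [hkl, Function.update_self]; exact h1
      · rw [Function.update_of_ne hv, ht v hv]
    · beta_reduce
      by_cases hv : v = l
      · subst hv; rw [hkl, Function.update_self]; exact h2
      · rw [Function.update_of_ne hv, ht v hv]

end KH

namespace KH

variable {d : ℕ}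

def appM (m : Fin d → ℕ) (i : Fin d) : Fin d → ℕ := Function.update m i (m i + 1)

def appT (t : Fin d → ℕ → ℝ) (i : Fin d) (mi : ℕ) (c : ℝ) : Fin d → ℕ → ℝ :=
  Function.update t i (fun k => if k ≤ mi then t i k else c)

def insT (t : Fin d → ℕ → ℝ) (i : Fin d) (q : ℕ) (c : ℝ) : Fin d → ℕ → ℝ :=
  Function.update t i (fun k => if k ≤ q then t i k else if k = q + 1 then c else t i (k - 1))

lemma appM_same (m : Fin d → ℕ) (i : Fin d) : appM m i i = m i + 1 := by
  simp [appM]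

lemma appM_noteq (m : Fin d → ℕ) {i l : Fin d} (h : l ≠ i) : appM m i l = m l := by
  simp [appM, Function.update_of_ne h]

lemma appT_noteq (t : Fin d → ℕ → ℝ) {i l : Fin d} (mi : ℕ) (c : ℝ) (h : l ≠ i) :
    appT t i mi c l = t l := by
  simp [appT, Function.update_of_ne h]

lemma appT_same_le (t : Fin d → ℕ → ℝ) (i : Fin d) (mi : ℕ) (c : ℝ) {k : ℕ} (h : k ≤ mi) :
    appT t i mi c i k = t i k := by
  simp [appT, Function.update_self, h]

lemma appT_same_top (t : Fin d → ℕ → ℝ) (i : Fin d) (mi : ℕ) (c : ℝ) :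
    appT t i mi c i (mi + 1) = c := by
  simp [appT, Function.update_self]

lemma insT_noteq (t : Fin d → ℕ → ℝ) {i l : Fin d} (q : ℕ) (c : ℝ) (h : l ≠ i) :
    insT t i q c l = t l := by
  simp [insT, Function.update_of_ne h]

lemma insT_le (t : Fin d → ℕ → ℝ) (i : Fin d) (q : ℕ) (c : ℝ) {k : ℕ} (h : k ≤ q) :
    insT t i q c i k = t i k := by
  simp [insT, Function.update_self, h]

lemma insT_mid (t : Fin d → ℕ → ℝ) (i : Fin d) (q : ℕ) (c : ℝ) :
    insT t i q c i (q + 1) = c := by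
  simp [insT, Function.update_self]

lemma insT_gt (t : Fin d → ℕ → ℝ) (i : Fin d) (q : ℕ) (c : ℝ) {k : ℕ} (h : q + 1 < k) :
    insT t i q c i k = t i (k - 1) := by
  have h1 : ¬ k ≤ q := by omega
  have h2 : k ≠ q + 1 := by omega
  simp [insT, Function.update_self, h1, h2]

lemma isGrid_app {S : Finset (Fin d)} {lo hi : Fin d → ℝ} {m : Fin d → ℕ} {t : Fin d → ℕ → ℝ}
    (hG : IsGrid S lo hi m t) {i : Fin d} (hiS : i ∈ S) {c : ℝ} (hc : hi i ≤ c) :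
    IsGrid S lo (Function.update hi i c) (appM m i) (appT t i (m i) c) := by
  obtain ⟨hmono, hfirst, hlast⟩ := hG
  refine ⟨?_, ?_, ?_⟩
  · intro l hlS j k hjk hk
    by_cases hl : l = i
    · subst hl
      rw [appM_same] at hk
      refine mono_of_step (M := m l + 1) ?_ j k hjk hk
      intro k' hk'
      by_cases h' : k' + 1 ≤ m l
      · rw [appT_same_le t l (m l) c (by omega), appT_same_le t l (m l) c h']
        exact hmono l hlS k' (k' + 1) (by omega) h'
      · have : k' = m l := by omega
        subst this
        rw [appT_same_le t l (m l) c (le_refl _), appT_same_top]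
        rw [hlast l hlS]; exact hc
    · rw [appT_noteq t (m i) c hl]
      rw [appM_noteq m hl] at hk
      exact hmono l hlS j k hjk hk
  · intro l hlS
    by_cases hl : l = i
    · subst hl
      rw [appT_same_le t l (m l) c (Nat.zero_le _)]
      exact hfirst l hlS
    · rw [appT_noteq t (m i) c hl]
      exact hfirst l hlS
  · intro l hlS
    by_cases hl : l = i
    · subst hl
      rw [appM_same, appT_same_top, Function.update_self]
    · rw [appT_noteq t (m i) c hl, appM_noteq m hl, Function.update_of_ne hl]
      exact hlast l hlS

lemma isGrid_ins {S : Finset (Fin d)} {lo hi : Fin d → ℝ} {m : Fin d → ℕ} {t : Fin d → ℕ → ℝ}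
    (hG : IsGrid S lo hi m t) {i : Fin d} (hiS : i ∈ S) {q : ℕ} (hq : q < m i) {c : ℝ}
    (h1 : t i q ≤ c) (h2 : c ≤ t i (q + 1)) :
    IsGrid S lo hi (appM m i) (insT t i q c) := by
  obtain ⟨hmono, hfirst, hlast⟩ := hG
  refine ⟨?_, ?_, ?_⟩
  · intro l hlS j k hjk hk
    by_cases hl : l = i
    · subst hl
      rw [appM_same] at hk
      refine mono_of_step (M := m l + 1) ?_ j k hjk hk
      intro k' hk'
      rcases lt_trichotomy k' q with h' | h' | h'
      · rw [insT_le t l q c (by omega), insT_le t l q c (by omega)]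
        exact hmono l hlS k' (k' + 1) (by omega) (by omega)
      · rw [h']
        rw [insT_le t l q c (le_refl _), insT_mid]
        exact h1
      · by_cases h'' : k' = q + 1
        · rw [h'']
          rw [insT_mid, insT_gt t l q c (by omega)]
          simpa using h2
        · rw [insT_gt t l q c (by omega), insT_gt t l q c (by omega)]
          have : k' - 1 ≤ k' := by omega
          have e : k' + 1 - 1 = k' := by omega
          rw [e]
          exact hmono l hlS (k' - 1) k' this (by omega)
    · rw [insT_noteq t q c hl]
      rw [appM_noteq m hl] at hk
      exact hmono l hlS j k hjk hk
  · intro l hlS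
    by_cases hl : l = i
    · subst hl
      rw [insT_le t l q c (Nat.zero_le _)]
      exact hfirst l hlS
    · rw [insT_noteq t q c hl]
      exact hfirst l hlS
  · intro l hlS
    by_cases hl : l = i
    · subst hl
      rw [appM_same, insT_gt t l q c (by omega)]
      simpa using hlast l hlS
    · rw [insT_noteq t q c hl, appM_noteq m hl]
      exact hlast l hlS

end KH

namespace KH

variable {d : ℕ}

def famF (S : Finset (Fin d)) (m : Fin d → ℕ) : Fin d → Finset ℕ :=
  fun l => if l ∈ S then Finset.range (m l) else {0}

def psi (f : (Fin d → ℝ) → ℝ) (S : Finset (Fin d)) (p : Fin d → ℝ) (m : Fin d → ℕ)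
    (t : Fin d → ℕ → ℝ) (i : Fin d) (c' : ℕ) : ℝ :=
  ∑ k ∈ Fintype.piFinset (Function.update (famF S m) i {c'}),
    |quasiVol f S p (fun v => t v (k v)) (fun v => t v (k v + 1))|

lemma upd_famF_app (S : Finset (Fin d)) (m : Fin d → ℕ) (i : Fin d) (c' : ℕ) :
    Function.update (famF S (appM m i)) i {c'} = Function.update (famF S m) i {c'} := by
  funext l
  by_cases hl : l = i
  · subst hl; simp [Function.update_self]
  · rw [Function.update_of_ne hl, Function.update_of_ne hl]
    unfold famF
    rw [appM_noteq m hl]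

lemma cellSum_eq_sum_psi (f : (Fin d → ℝ) → ℝ) (S : Finset (Fin d)) (p : Fin d → ℝ)
    (m : Fin d → ℕ) (t : Fin d → ℕ → ℝ) {i : Fin d} (hiS : i ∈ S) :
    cellSum f S p m t = ∑ c' ∈ Finset.range (m i), psi f S p m t i c' := by
  unfold psi
  have e0 : cellSum f S p m t = ∑ k ∈ Fintype.piFinset (famF S m),
      |quasiVol f S p (fun v => t v (k v)) (fun v => t v (k v + 1))| := rfl
  rw [e0, sum_piFinset_split i (famF S m)
    (fun k => |quasiVol f S p (fun v => t v (k v)) (fun v => t v (k v + 1))|)]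
  have h1 : famF S m i = Finset.range (m i) := by unfold famF; simp [hiS]
  rw [h1]

lemma cellSum_app_eq_sum_psi (f : (Fin d → ℝ) → ℝ) (S : Finset (Fin d)) (p : Fin d → ℝ)
    (m : Fin d → ℕ) (t'' : Fin d → ℕ → ℝ) {i : Fin d} (hiS : i ∈ S) :
    cellSum f S p (appM m i) t'' = ∑ c' ∈ Finset.range (m i + 1), psi f S p m t'' i c' := by
  unfold psi
  have e0 : cellSum f S p (appM m i) t'' = ∑ k ∈ Fintype.piFinset (famF S (appM m i)),
      |quasiVol f S p (fun v => t'' v (k v)) (fun v => t'' v (k v + 1))| := rfl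
  rw [e0, sum_piFinset_split i (famF S (appM m i))
    (fun k => |quasiVol f S p (fun v => t'' v (k v)) (fun v => t'' v (k v + 1))|)]
  have h1 : famF S (appM m i) i = Finset.range (m i + 1) := by
    unfold famF; simp [hiS, appM_same]
  rw [h1]
  exact Finset.sum_congr rfl fun c' _ => by rw [upd_famF_app]

lemma psi_app_eq (f : (Fin d → ℝ) → ℝ) (S : Finset (Fin d)) (p : Fin d → ℝ)
    (m : Fin d → ℕ) (t : Fin d → ℕ → ℝ) {i : Fin d} (c : ℝ) {c' : ℕ} (hc' : c' < m i) :
    psi f S p m (appT t i (m i) c) i c' = psi f S p m t i c' :=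
  inner_cell_reindex f S p i (famF S m) (appT t i (m i) c) t c' c'
    (appT_same_le t i (m i) c (by omega)) (appT_same_le t i (m i) c (by omega))
    (fun l' hl' => appT_noteq t (m i) c hl')

lemma cellSum_app_eq (f : (Fin d → ℝ) → ℝ) (S : Finset (Fin d)) (p : Fin d → ℝ)
    (m : Fin d → ℕ) (t : Fin d → ℕ → ℝ) {i : Fin d} (hiS : i ∈ S) (c : ℝ) :
    cellSum f S p (appM m i) (appT t i (m i) c)
      = cellSum f S p m t + psi f S p m (appT t i (m i) c) i (m i) := by
  rw [cellSum_app_eq_sum_psi f S p m (appT t i (m i) c) hiS, Finset.sum_range_succ,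
    cellSum_eq_sum_psi f S p m t hiS]
  congr 1
  exact Finset.sum_congr rfl fun c' hc' => psi_app_eq f S p m t c (Finset.mem_range.mp hc')

lemma cellSum_le_app (f : (Fin d → ℝ) → ℝ) (S : Finset (Fin d)) (p : Fin d → ℝ)
    (m : Fin d → ℕ) (t : Fin d → ℕ → ℝ) {i : Fin d} (hiS : i ∈ S) (c : ℝ) :
    cellSum f S p m t ≤ cellSum f S p (appM m i) (appT t i (m i) c) := by
  rw [cellSum_app_eq f S p m t hiS c]
  exact le_add_of_nonneg_right (Finset.sum_nonneg fun _ _ => abs_nonneg _)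

lemma sum_range_decomp (g : ℕ → ℝ) {q M : ℕ} (hq : q < M) :
    ∑ c' ∈ Finset.range M, g c'
      = (∑ c' ∈ Finset.range q, g c') + g q + ∑ c' ∈ Finset.Ico (q + 1) M, g c' := by
  rw [Finset.range_eq_Ico, ← Finset.sum_Ico_consecutive g (Nat.zero_le q) hq.le,
    Finset.sum_eq_sum_Ico_succ_bot hq, ← Finset.range_eq_Ico]
  ring

lemma cellSum_le_ins (f : (Fin d → ℝ) → ℝ) (S : Finset (Fin d)) (p : Fin d → ℝ)
    (m : Fin d → ℕ) (t : Fin d → ℕ → ℝ) {i : Fin d} (hiS : i ∈ S) {q : ℕ} (hq : q < m i)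
    (c : ℝ) :
    cellSum f S p m t ≤ cellSum f S p (appM m i) (insT t i q c) := by
  have p1 : ∀ c' : ℕ, c' + 1 ≤ q → psi f S p m (insT t i q c) i c' = psi f S p m t i c' :=
    fun c' hc' => inner_cell_reindex f S p i (famF S m) (insT t i q c) t c' c'
      (insT_le t i q c (by omega)) (insT_le t i q c hc')
      (fun l' hl' => insT_noteq t q c hl')
  have p2 : ∀ c' : ℕ, q < c' → psi f S p m (insT t i q c) i (c' + 1) = psi f S p m t i c' := by
    intro c' hc'
    refine inner_cell_reindex f S p i (famF S m) (insT t i q c) t (c' + 1) c' ?_ ?_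
      (fun l' hl' => insT_noteq t q c hl')
    · rw [insT_gt t i q c (by omega)]
      congr 1
    · rw [insT_gt t i q c (by omega)]
      congr 1
  have p3 : psi f S p m t i q
      ≤ psi f S p m (insT t i q c) i q + psi f S p m (insT t i q c) i (q + 1) := by
    have eA : psi f S p m (insT t i q c) i q
        = ∑ k ∈ Fintype.piFinset (Function.update (famF S m) i {q}),
            |quasiVol f S p (fun v => t v (k v)) (Function.update (fun v => t v (k v + 1)) i c)| := by
      unfold psi
      refine Finset.sum_congr rfl fun k hk => ?_
      rw [Fintype.mem_piFinset] at hk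
      have hki : k i = q := by have := hk i; simpa using this
      congr 1
      refine quasiVol_congr f (fun _ _ => rfl) (fun v _ => ?_) (fun v _ => ?_)
      · by_cases hv : v = i
        · subst hv; rw [hki, insT_le t v q c (le_refl _)]
        · rw [insT_noteq t q c hv]
      · by_cases hv : v = i
        · subst hv; rw [hki, insT_mid, Function.update_self]
        · rw [insT_noteq t q c hv, Function.update_of_ne hv]
    have eB : psi f S p m (insT t i q c) i (q + 1)
        = ∑ k ∈ Fintype.piFinset (Function.update (famF S m) i {q}),
            |quasiVol f S p (Function.update (fun v => t v (k v)) i c) (fun v => t v (k v + 1))| := by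
      unfold psi
      refine Finset.sum_nbij' (fun k => Function.update k i q) (fun k => Function.update k i (q + 1))
        ?_ ?_ ?_ ?_ ?_
      · intro k hk
        rw [Fintype.mem_piFinset] at hk ⊢
        intro v
        beta_reduce
        by_cases hv : v = i
        · subst hv; simp [Function.update_self]
        · rw [Function.update_of_ne hv, Function.update_of_ne hv]
          have := hk v
          rwa [Function.update_of_ne hv] at this
      · intro k hk
        rw [Fintype.mem_piFinset] at hk ⊢
        intro v
        beta_reduce
        by_cases hv : v = i
        · subst hv; simp [Function.update_self]
        · rw [Function.update_of_ne hv, Function.update_of_ne hv]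
          have := hk v
          rwa [Function.update_of_ne hv] at this
      · intro k hk
        rw [Fintype.mem_piFinset] at hk
        have : k i = q + 1 := by have := hk i; simpa using this
        beta_reduce
        rw [Function.update_idem, ← this, Function.update_eq_self]
      · intro k hk
        rw [Fintype.mem_piFinset] at hk
        have : k i = q := by have := hk i; simpa using this
        beta_reduce
        rw [Function.update_idem, ← this, Function.update_eq_self]
      · intro k hk
        rw [Fintype.mem_piFinset] at hk
        have hki : k i = q + 1 := by have := hk i; simpa using this
        congr 1
        refine quasiVol_congr f (fun _ _ => rfl) (fun v _ => ?_) (fun v _ => ?_)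
        · beta_reduce
          by_cases hv : v = i
          · subst hv; rw [hki, insT_mid, Function.update_self]
          · rw [insT_noteq t q c hv, Function.update_of_ne hv, Function.update_of_ne hv]
        · beta_reduce
          by_cases hv : v = i
          · subst hv
            rw [hki, insT_gt t v q c (by omega), Function.update_self]
            norm_num
          · rw [insT_noteq t q c hv, Function.update_of_ne hv]
    rw [eA, eB, ← Finset.sum_add_distrib]
    unfold psi
    refine Finset.sum_le_sum fun k hk => ?_
    rw [quasiVol_split f hiS p (fun v => t v (k v)) (fun v => t v (k v + 1)) c]
    exact abs_add_le _ _
  rw [cellSum_eq_sum_psi f S p m t hiS, cellSum_app_eq_sum_psi f S p m (insT t i q c) hiS]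
  rw [sum_range_decomp (psi f S p m t i) hq,
    sum_range_decomp (psi f S p m (insT t i q c) i) (show q < m i + 1 by omega),
    Finset.sum_eq_sum_Ico_succ_bot (show q + 1 < m i + 1 by omega)]
  have e1 : ∑ c' ∈ Finset.range q, psi f S p m (insT t i q c) i c'
      = ∑ c' ∈ Finset.range q, psi f S p m t i c' :=
    Finset.sum_congr rfl fun c' hc' => p1 c' (Finset.mem_range.mp hc')
  have e2 : ∑ c' ∈ Finset.Ico (q + 2) (m i + 1), psi f S p m (insT t i q c) i c'
      = ∑ c' ∈ Finset.Ico (q + 1) (m i), psi f S p m t i c' := by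
    rw [Finset.sum_Ico_eq_sum_range, Finset.sum_Ico_eq_sum_range]
    rw [show m i + 1 - (q + 2) = m i - (q + 1) from by omega]
    refine Finset.sum_congr rfl fun j hj => ?_
    rw [show q + 2 + j = (q + 1 + j) + 1 from by omega]
    exact p2 (q + 1 + j) (by omega)
  rw [e1, e2]
  linarith [p3]

end KH

namespace KH

variable {d : ℕ}

lemma update_one_one (i : Fin d) : Function.update (1 : Fin d → ℝ) i 1 = 1 := by
  funext l
  by_cases hl : l = i
  · subst hl; rw [Function.update_self]; rfl
  · rw [Function.update_of_ne hl]

lemma isGrid_of_grid {S : Finset (Fin d)} {lo hi : Fin d → ℝ} (G : Grid d S lo hi) :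
    IsGrid S lo hi G.m G.t := ⟨G.mono, G.first, G.last⟩

/-- any grid sum on a sub-box `[0, update 1 i c]` is at most `vitaliVar f S 1 0 1`. -/
lemma gridSum_sub_le (f : (Fin d → ℝ) → ℝ) {S : Finset (Fin d)} {i : Fin d} (hiS : i ∈ S)
    (hbvS : BddAbove (Set.range (gridSum f S 1 0 1))) {c : ℝ} (hc1 : c ≤ 1)
    (G : Grid d S 0 (Function.update 1 i c)) :
    gridSum f S 1 0 (Function.update 1 i c) G ≤ vitaliVar f S 1 0 1 := by
  rw [gridSum_eq_cellSum]
  have happ := isGrid_app (isGrid_of_grid G) hiS (c := 1) (by rw [Function.update_self]; exact hc1)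
  rw [Function.update_idem, update_one_one] at happ
  calc cellSum f S 1 G.m G.t ≤ cellSum f S 1 (appM G.m i) (appT G.t i (G.m i) 1) :=
        cellSum_le_app f S 1 G.m G.t hiS 1
    _ ≤ vitaliVar f S 1 0 1 := cellSum_le_vitaliVar f S 1 0 1 happ hbvS

lemma bddAbove_sub (f : (Fin d → ℝ) → ℝ) {S : Finset (Fin d)} {i : Fin d} (hiS : i ∈ S)
    (hbvS : BddAbove (Set.range (gridSum f S 1 0 1))) {c : ℝ} (hc1 : c ≤ 1) :
    BddAbove (Set.range (gridSum f S 1 0 (Function.update 1 i c))) := by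
  refine ⟨vitaliVar f S 1 0 1, ?_⟩
  rintro y ⟨G, rfl⟩
  exact gridSum_sub_le f hiS hbvS hc1 G

lemma nonempty_grid_sub (S : Finset (Fin d)) (i : Fin d) {c : ℝ} (hc0 : 0 ≤ c) :
    Nonempty (Grid d S 0 (Function.update 1 i c)) := by
  refine nonempty_grid S 0 (Function.update 1 i c) fun l _ => ?_
  by_cases hl : l = i
  · subst hl; rw [Function.update_self]; exact hc0
  · rw [Function.update_of_ne hl]
    norm_num

/-- Core increment bound: variation of the sub-box plus a single box quasi-volume
is at most the variation of the bigger sub-box. -/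
lemma qv_inc_le (f : (Fin d → ℝ) → ℝ) {S : Finset (Fin d)} {i : Fin d} (hiS : i ∈ S)
    (hbvS : BddAbove (Set.range (gridSum f S 1 0 1)))
    {u v : ℝ} (hu : 0 ≤ u) (huv : u ≤ v) (hv : v ≤ 1) {z : Fin d → ℝ}
    (hz : ∀ l, 0 ≤ z l ∧ z l ≤ 1) :
    vitaliVar f S 1 0 (Function.update 1 i u)
      + |quasiVol f S 1 (Function.update z i u) (Function.update 1 i v)|
    ≤ vitaliVar f S 1 0 (Function.update 1 i v) := by
  set Δ := |quasiVol f S 1 (Function.update z i u) (Function.update 1 i v)| with hΔ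
  have key : ∀ G : Grid d S 0 (Function.update 1 i u),
      gridSum f S 1 0 (Function.update 1 i u) G + Δ
        ≤ vitaliVar f S 1 0 (Function.update 1 i v) := by
    intro G
    -- refine the grid so that every coordinate l ∈ S.erase i has z l among its levels
    have refine_claim : ∀ W : Finset (Fin d), W ⊆ S.erase i →
        ∃ m₁ t₁, IsGrid S 0 (Function.update 1 i u) m₁ t₁ ∧
          cellSum f S 1 G.m G.t ≤ cellSum f S 1 m₁ t₁ ∧
          ∀ l ∈ W, ∃ qd, qd ≤ m₁ l ∧ t₁ l qd = z l := by
      intro W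
      induction W using Finset.induction_on with
      | empty =>
        intro _
        exact ⟨G.m, G.t, isGrid_of_grid G, le_refl _, fun l hl => absurd hl (by simp)⟩
      | @insert l₀ W' hl₀ ih =>
        intro hsub
        obtain ⟨m₁, t₁, hg₁, hc₁, hw₁⟩ := ih (fun l hl => hsub (Finset.mem_insert_of_mem hl))
        have hl₀S : l₀ ∈ S := Finset.mem_of_mem_erase (hsub (Finset.mem_insert_self l₀ W'))
        have hl₀i : l₀ ≠ i := Finset.ne_of_mem_erase (hsub (Finset.mem_insert_self l₀ W'))
        have hm₁pos : 0 < m₁ l₀ := by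
          by_contra hcon
          have h0 : m₁ l₀ = 0 := by omega
          have e1 := hg₁.2.1 l₀ hl₀S
          have e2 := hg₁.2.2 l₀ hl₀S
          rw [h0] at e2
          rw [e1] at e2
          rw [Function.update_of_ne hl₀i] at e2
          have : (0 : ℝ) = 1 := by simpa using e2
          norm_num at this
        have hQne : ((Finset.range (m₁ l₀)).filter (fun qq => t₁ l₀ qq ≤ z l₀)).Nonempty := by
          refine ⟨0, ?_⟩
          rw [Finset.mem_filter, Finset.mem_range]
          refine ⟨hm₁pos, ?_⟩
          rw [hg₁.2.1 l₀ hl₀S]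
          exact (hz l₀).1
        set qpos := ((Finset.range (m₁ l₀)).filter (fun qq => t₁ l₀ qq ≤ z l₀)).max' hQne with hqpos
        have hqmem := Finset.max'_mem _ hQne
        rw [Finset.mem_filter, Finset.mem_range] at hqmem
        have hq1 : t₁ l₀ qpos ≤ z l₀ := hqmem.2
        have hqlt : qpos < m₁ l₀ := hqmem.1
        have hq2 : z l₀ ≤ t₁ l₀ (qpos + 1) := by
          by_cases hqe : qpos + 1 = m₁ l₀
          · rw [hqe, hg₁.2.2 l₀ hl₀S, Function.update_of_ne hl₀i]
            exact (hz l₀).2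
          · have hqlt2 : qpos + 1 < m₁ l₀ := by omega
            by_contra hcon
            have hmem2 : qpos + 1 ∈ (Finset.range (m₁ l₀)).filter (fun qq => t₁ l₀ qq ≤ z l₀) := by
              rw [Finset.mem_filter, Finset.mem_range]
              exact ⟨hqlt2, le_of_not_ge hcon⟩
            have := Finset.le_max' _ _ hmem2
            omega
        refine ⟨appM m₁ l₀, insT t₁ l₀ qpos (z l₀),
          isGrid_ins hg₁ hl₀S hqlt hq1 hq2,
          hc₁.trans (cellSum_le_ins f S 1 m₁ t₁ hl₀S hqlt (z l₀)), ?_⟩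
        intro l hl
        rcases Finset.mem_insert.mp hl with hl | hl
        · subst hl
          refine ⟨qpos + 1, ?_, insT_mid t₁ l qpos (z l)⟩
          rw [appM_same]
          omega
        · obtain ⟨qd, hqd, hqdval⟩ := hw₁ l hl
          have hlne : l ≠ l₀ := fun he => hl₀ (he ▸ hl)
          refine ⟨qd, ?_, ?_⟩
          · rw [appM_noteq m₁ hlne]; exact hqd
          · rw [insT_noteq t₁ qpos (z l₀) hlne]; exact hqdval
    obtain ⟨m₁, t₁, hg₁, hc₁, hw₁⟩ := refine_claim (S.erase i) (Finset.Subset.refl _)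
    -- append level v in coordinate i
    have happ := isGrid_app hg₁ hiS (c := v) (by rw [Function.update_self]; exact huv)
    rw [Function.update_idem] at happ
    -- the box [0, update 1 i v]
    have happeq := cellSum_app_eq f S 1 m₁ t₁ hiS v
    -- slab bound
    have hslab : Δ ≤ psi f S 1 m₁ (appT t₁ i (m₁ i) v) i (m₁ i) := by
      classical
      have hwit : ∀ l, ∃ qd, qd ≤ m₁ l ∧ ((l ∈ S ∧ l ≠ i) → t₁ l qd = z l) := by
        intro l
        by_cases h : l ∈ S ∧ l ≠ i
        · obtain ⟨qd, h1, h2⟩ := hw₁ l (Finset.mem_erase.mpr ⟨h.2, h.1⟩)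
          exact ⟨qd, h1, fun _ => h2⟩
        · exact ⟨0, Nat.zero_le _, fun hc => absurd hc h⟩
      choose qw hqw1 hqw2 using hwit
      have hcorner : quasiVol f S 1 (Function.update z i u) (Function.update 1 i v)
          = quasiVol f S 1
              (fun l => (appT t₁ i (m₁ i) v) l ((fun l' => if l' = i then m₁ i else if l' ∈ S then qw l' else 0) l))
              (fun l => (appT t₁ i (m₁ i) v) l ((fun l' => if l' = i then m₁ i + 1 else m₁ l') l)) := by
        refine quasiVol_congr f (fun _ _ => rfl) (fun l hlS => ?_) (fun l hlS => ?_)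
        · beta_reduce
          by_cases hl : l = i
          · subst hl
            rw [if_pos rfl, Function.update_self, appT_same_le t₁ l (m₁ l) v (le_refl _),
              hg₁.2.2 l hiS, Function.update_self]
          · rw [if_neg hl, if_pos hlS, Function.update_of_ne hl,
              appT_noteq t₁ (m₁ i) v hl, hqw2 l ⟨hlS, hl⟩]
        · beta_reduce
          by_cases hl : l = i
          · subst hl
            rw [if_pos rfl, Function.update_self, appT_same_top]
          · rw [if_neg hl, Function.update_of_ne hl, appT_noteq t₁ (m₁ i) v hl,
              hg₁.2.2 l hlS, Function.update_of_ne hl]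
      have hsub := qv_subdiv f S 1 (appT t₁ i (m₁ i) v)
        (fun l' => if l' = i then m₁ i else if l' ∈ S then qw l' else 0)
        (fun l' => if l' = i then m₁ i + 1 else m₁ l')
        (by
          intro l hlS
          beta_reduce
          by_cases hl : l = i
          · subst hl; simp
          · rw [if_neg hl, if_neg hl, if_pos hlS]
            exact hqw1 l)
      rw [hΔ, hcorner, hsub]
      refine (Finset.abs_sum_le_sum_abs _ _).trans ?_
      unfold psi
      refine Finset.sum_le_sum_of_subset_of_nonneg ?_ (fun _ _ _ => abs_nonneg _)
      refine Fintype.piFinset_subset _ _ fun l => ?_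
      beta_reduce
      by_cases hl : l = i
      · subst hl
        simp [hiS, famF, Nat.Ico_succ_singleton]
      · rw [Function.update_of_ne hl]
        by_cases hlS : l ∈ S
        · simp only [if_neg hl, if_pos hlS, famF, Finset.range_eq_Ico]
          exact Finset.Ico_subset_Ico (Nat.zero_le _) (le_refl _)
        · simp only [if_neg hl, if_neg hlS, famF]
          exact Finset.Subset.refl _
    -- assemble
    have hbdd2 : BddAbove (Set.range (gridSum f S 1 0 (Function.update 1 i v))) :=
      bddAbove_sub f hiS hbvS hv
    have hfinal : cellSum f S 1 (appM m₁ i) (appT t₁ i (m₁ i) v)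
        ≤ vitaliVar f S 1 0 (Function.update 1 i v) :=
      cellSum_le_vitaliVar f S 1 0 (Function.update 1 i v) happ hbdd2
    rw [gridSum_eq_cellSum]
    calc cellSum f S 1 G.m G.t + Δ ≤ cellSum f S 1 m₁ t₁ + psi f S 1 m₁ (appT t₁ i (m₁ i) v) i (m₁ i) :=
          add_le_add hc₁ hslab
      _ = cellSum f S 1 (appM m₁ i) (appT t₁ i (m₁ i) v) := (cellSum_app_eq f S 1 m₁ t₁ hiS v).symm
      _ ≤ vitaliVar f S 1 0 (Function.update 1 i v) := hfinal
  -- conclude by taking sup over G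
  haveI hne : Nonempty (Grid d S 0 (Function.update 1 i u)) := nonempty_grid_sub S i hu
  have : vitaliVar f S 1 0 (Function.update 1 i u)
      ≤ vitaliVar f S 1 0 (Function.update 1 i v) - Δ := by
    refine csSup_le (Set.range_nonempty _) ?_
    rintro y ⟨G, rfl⟩
    linarith [key G]
  linarith

end KH

namespace KH

variable {d : ℕ}

lemma quasiVol_sub (F G : (Fin d → ℝ) → ℝ) (S : Finset (Fin d)) (p a b : Fin d → ℝ) :
    quasiVol (fun w => F w - G w) S p a b = quasiVol F S p a b - quasiVol G S p a b := by
  unfold quasiVol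
  rw [← Finset.sum_sub_distrib]
  exact Finset.sum_congr rfl fun T hT => by ring

lemma mem_hk (i : Fin d) (T : Finset (Fin d)) :
    insert i T ∈ ((Finset.univ : Finset (Fin d)).powerset).erase ∅ :=
  Finset.mem_erase.mpr ⟨Finset.insert_ne_empty i T,
    Finset.mem_powerset.mpr (Finset.subset_univ _)⟩

def gfun (f : (Fin d → ℝ) → ℝ) (i : Fin d) (c : ℝ) : ℝ :=
  ∑ T ∈ ((Finset.univ : Finset (Fin d)).erase i).powerset,
    vitaliVar f (insert i T) 1 0 (Function.update 1 i (min 1 (max 0 c)))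

lemma clamp_mem (c : ℝ) : 0 ≤ min 1 (max 0 c) ∧ min 1 (max 0 c) ≤ 1 :=
  ⟨le_min (by norm_num) (le_max_left 0 c), min_le_left 1 _⟩

lemma clamp_of_mem {c : ℝ} (h0 : 0 ≤ c) (h1 : c ≤ 1) : min 1 (max 0 c) = c := by
  rw [max_eq_right h0, min_eq_right h1]

lemma vV_mono (f : (Fin d → ℝ) → ℝ) {S : Finset (Fin d)} {i : Fin d} (hiS : i ∈ S)
    (hbvS : BddAbove (Set.range (gridSum f S 1 0 1)))
    {u v : ℝ} (hu : 0 ≤ u) (huv : u ≤ v) (hv : v ≤ 1) :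
    vitaliVar f S 1 0 (Function.update 1 i u) ≤ vitaliVar f S 1 0 (Function.update 1 i v) := by
  have := qv_inc_le f hiS hbvS hu huv hv (z := 1) (fun l => by norm_num)
  have habs : (0:ℝ) ≤ |quasiVol f S 1 (Function.update 1 i u) (Function.update 1 i v)| :=
    abs_nonneg _
  linarith

lemma gfun_monotone (f : (Fin d → ℝ) → ℝ) (hbv : BddHKVar f) (i : Fin d) :
    Monotone (gfun f i) := by
  intro c c' hcc
  unfold gfun
  refine Finset.sum_le_sum fun T hT => ?_
  have hbvS : BddAbove (Set.range (gridSum f (insert i T) 1 0 1)) := hbv (insert i T) (mem_hk i T)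
  refine vV_mono f (Finset.mem_insert_self i T) hbvS (clamp_mem c).1 ?_ (clamp_mem c').2
  exact min_le_min (le_refl 1) (max_le_max (le_refl 0) hcc)

lemma single_coord_bound (f : (Fin d → ℝ) → ℝ) (hbv : BddHKVar f) (i : Fin d)
    {z : Fin d → ℝ} (hz : z ∈ Set.Icc (0 : Fin d → ℝ) 1)
    {u v : ℝ} (hu : 0 ≤ u) (huv : u ≤ v) (hv : v ≤ 1) :
    |f (Function.update z i u) - f (Function.update z i v)| ≤ gfun f i v - gfun f i u := by
  have hzl : ∀ l, 0 ≤ z l ∧ z l ≤ 1 := fun l => ⟨hz.1 l, hz.2 l⟩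
  set U := (Finset.univ : Finset (Fin d)).erase i with hU
  set a := Function.update z i 1 with ha
  set h : (Fin d → ℝ) → ℝ := fun w => f (Function.update w i u) - f (Function.update w i v)
    with hh
  have hL0 : ∑ T ∈ U.powerset, (-1 : ℝ) ^ T.card * quasiVol h T 1 a 1 = h a := by
    refine sum_quasiVol_powerset h U a 1 fun l hl => ?_
    have : l = i := by
      by_contra hne
      exact hl (Finset.mem_erase.mpr ⟨hne, Finset.mem_univ l⟩)
    subst this
    rw [ha, Function.update_self]; rfl
  have hha : h a = f (Function.update z i u) - f (Function.update z i v) := by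
    rw [hh, ha]
    beta_reduce
    rw [Function.update_idem, Function.update_idem]
  have hterm : ∀ T ∈ U.powerset, quasiVol h T 1 a 1
      = -(quasiVol f (insert i T) 1 (Function.update z i u) (Function.update 1 i v)) := by
    intro T hT
    rw [Finset.mem_powerset] at hT
    have hiT : i ∉ T := fun hmem => (Finset.mem_erase.mp (hT hmem)).1 rfl
    have e1 : quasiVol h T 1 a 1
        = quasiVol f T (Function.update 1 i u) a 1 - quasiVol f T (Function.update 1 i v) a 1 := by
      rw [hh]
      rw [quasiVol_sub (fun w => f (Function.update w i u)) (fun w => f (Function.update w i v))]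
      rw [quasiVol_comp_update f hiT u, quasiVol_comp_update f hiT v]
    have e2 := quasiVol_insert f hiT (1 : Fin d → ℝ)
      (Function.update z i u) (Function.update 1 i v)
    rw [Function.update_self, Function.update_self] at e2
    have e3 : quasiVol f T (Function.update 1 i v)
        (Function.update z i u) (Function.update 1 i v)
        = quasiVol f T (Function.update 1 i v) a 1 := by
      refine quasiVol_congr f (fun _ _ => rfl) (fun l hl => ?_) (fun l hl => ?_)
      · have hli : l ≠ i := fun he => hiT (he ▸ hl)
        rw [Function.update_of_ne hli, ha, Function.update_of_ne hli]
      · have hli : l ≠ i := fun he => hiT (he ▸ hl)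
        rw [Function.update_of_ne hli]
    have e4 : quasiVol f T (Function.update 1 i u)
        (Function.update z i u) (Function.update 1 i v)
        = quasiVol f T (Function.update 1 i u) a 1 := by
      refine quasiVol_congr f (fun _ _ => rfl) (fun l hl => ?_) (fun l hl => ?_)
      · have hli : l ≠ i := fun he => hiT (he ▸ hl)
        rw [Function.update_of_ne hli, ha, Function.update_of_ne hli]
      · have hli : l ≠ i := fun he => hiT (he ▸ hl)
        rw [Function.update_of_ne hli]
    rw [e3, e4] at e2
    rw [e1, e2]
    ring
  have hrepr : f (Function.update z i u) - f (Function.update z i v)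
      = ∑ T ∈ U.powerset, (-1 : ℝ) ^ T.card
          * -(quasiVol f (insert i T) 1 (Function.update z i u) (Function.update 1 i v)) := by
    rw [← hha, ← hL0]
    exact Finset.sum_congr rfl fun T hT => by rw [hterm T hT]
  rw [hrepr]
  calc |∑ T ∈ U.powerset, (-1 : ℝ) ^ T.card
          * -(quasiVol f (insert i T) 1 (Function.update z i u) (Function.update 1 i v))|
      ≤ ∑ T ∈ U.powerset, |(-1 : ℝ) ^ T.card
          * -(quasiVol f (insert i T) 1 (Function.update z i u) (Function.update 1 i v))| :=
        Finset.abs_sum_le_sum_abs _ _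
    _ = ∑ T ∈ U.powerset,
          |quasiVol f (insert i T) 1 (Function.update z i u) (Function.update 1 i v)| := by
        refine Finset.sum_congr rfl fun T hT => ?_
        rw [abs_mul, abs_neg, abs_pow, abs_neg, abs_one, one_pow, one_mul]
    _ ≤ ∑ T ∈ U.powerset,
          (vitaliVar f (insert i T) 1 0 (Function.update 1 i v)
            - vitaliVar f (insert i T) 1 0 (Function.update 1 i u)) := by
        refine Finset.sum_le_sum fun T hT => ?_
        have hbvS : BddAbove (Set.range (gridSum f (insert i T) 1 0 1)) :=
          hbv (insert i T) (mem_hk i T)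
        have := qv_inc_le f (Finset.mem_insert_self i T) hbvS hu huv hv hzl
        linarith
    _ = gfun f i v - gfun f i u := by
        rw [Finset.sum_sub_distrib]
        unfold gfun
        rw [clamp_of_mem (hu.trans huv) hv, clamp_of_mem hu (huv.trans hv)]

lemma f_diff_bound (f : (Fin d → ℝ) → ℝ) (hbv : BddHKVar f) (U : Finset (Fin d)) :
    ∀ xx yy : Fin d → ℝ, xx ∈ Set.Icc (0 : Fin d → ℝ) 1 → yy ∈ Set.Icc (0 : Fin d → ℝ) 1 →
    xx ≤ yy → (∀ l ∉ U, xx l = yy l) →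
    |f yy - f xx| ≤ ∑ l ∈ U, (gfun f l (yy l) - gfun f l (xx l)) := by
  induction U using Finset.induction_on with
  | empty =>
    intro xx yy _ _ _ hoff
    have : xx = yy := funext fun l => hoff l (by simp)
    subst this
    simp
  | @insert i U' hiU ih =>
    intro xx yy hxx hyy hle hoff
    set zz := Function.update yy i (xx i) with hzz
    have hzz_mem : zz ∈ Set.Icc (0 : Fin d → ℝ) 1 := by
      constructor
      · intro l
        by_cases hl : l = i
        · subst hl; rw [hzz, Function.update_self]; exact hxx.1 l
        · rw [hzz, Function.update_of_ne hl]; exact hyy.1 l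
      · intro l
        by_cases hl : l = i
        · subst hl; rw [hzz, Function.update_self]; exact hxx.2 l
        · rw [hzz, Function.update_of_ne hl]; exact hyy.2 l
    have hxz : xx ≤ zz := by
      intro l
      by_cases hl : l = i
      · subst hl; rw [hzz, Function.update_self]
      · rw [hzz, Function.update_of_ne hl]; exact hle l
    have hoff' : ∀ l ∉ U', xx l = zz l := by
      intro l hl
      by_cases hli : l = i
      · subst hli; rw [hzz, Function.update_self]
      · rw [hzz, Function.update_of_ne hli]
        exact hoff l (by
          rw [Finset.mem_insert]
          push_neg
          exact ⟨hli, hl⟩)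
    have h1 : |f yy - f zz| ≤ gfun f i (yy i) - gfun f i (xx i) := by
      have := single_coord_bound f hbv i hyy (u := xx i) (v := yy i)
        (hxx.1 i) (hle i) (hyy.2 i)
      rw [Function.update_eq_self] at this
      rw [hzz]
      rw [abs_sub_comm]
      exact this
    have h2 := ih xx zz hxx hzz_mem hxz hoff'
    have h3 : ∑ l ∈ U', (gfun f l (zz l) - gfun f l (xx l))
        = ∑ l ∈ U', (gfun f l (yy l) - gfun f l (xx l)) := by
      refine Finset.sum_congr rfl fun l hl => ?_
      have hli : l ≠ i := fun he => hiU (he ▸ hl)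
      rw [hzz, Function.update_of_ne hli]
    rw [Finset.sum_insert hiU]
    calc |f yy - f xx| ≤ |f yy - f zz| + |f zz - f xx| := abs_sub_le _ _ _
      _ ≤ (gfun f i (yy i) - gfun f i (xx i))
            + ∑ l ∈ U', (gfun f l (yy l) - gfun f l (xx l)) := by
          rw [← h3]; exact add_le_add h1 h2
      _ = _ := rfl

end KH

namespace KH

noncomputable def tL (L : Finset ℝ) : ℕ → ℝ :=
  fun k => if h : k < L.card then ((L.orderIsoOfFin rfl ⟨k, h⟩ : {x // x ∈ L}) : ℝ) else 1

def cnt (L : Finset ℝ) (y : ℝ) : ℕ := (L.filter (· < y)).card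

section levels

variable {L : Finset ℝ}

lemma tL_mem {k : ℕ} (h : k < L.card) : tL L k ∈ L := by
  unfold tL
  rw [dif_pos h]
  exact (L.orderIsoOfFin rfl ⟨k, h⟩).2

lemma tL_lt_tL {j k : ℕ} (hjk : j < k) (hk : k < L.card) : tL L j < tL L k := by
  unfold tL
  rw [dif_pos hk, dif_pos (hjk.trans hk)]
  have h2 : (L.orderIsoOfFin rfl) ⟨j, hjk.trans hk⟩ < (L.orderIsoOfFin rfl) ⟨k, hk⟩ :=
    (L.orderIsoOfFin rfl).strictMono (Fin.mk_lt_mk.mpr hjk)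
  exact_mod_cast h2

lemma tL_le_tL {j k : ℕ} (hjk : j ≤ k) (hk : k < L.card) : tL L j ≤ tL L k := by
  rcases eq_or_lt_of_le hjk with h | h
  · subst h; exact le_refl _
  · exact (tL_lt_tL h hk).le

lemma tL_surj {y : ℝ} (hy : y ∈ L) : ∃ k, ∃ h : k < L.card, tL L k = y := by
  obtain ⟨q, hq⟩ := (L.orderIsoOfFin rfl).surjective ⟨y, hy⟩
  refine ⟨q.1, q.2, ?_⟩
  unfold tL
  rw [dif_pos q.2]
  simp only [Fin.eta, hq]

lemma cnt_mono {y y' : ℝ} (h : y ≤ y') : cnt L y ≤ cnt L y' := by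
  unfold cnt
  refine Finset.card_le_card fun z hz => ?_
  rw [Finset.mem_filter] at hz ⊢
  exact ⟨hz.1, lt_of_lt_of_le hz.2 h⟩

lemma cnt_tL {k : ℕ} (hk : k < L.card) : cnt L (tL L k) = k := by
  classical
  refine le_antisymm ?_ ?_
  · -- inject filter into range k via the inverse iso
    unfold cnt
    have : L.filter (· < tL L k) ⊆
        Finset.image (fun q : Fin L.card => ((L.orderIsoOfFin rfl q : {x // x ∈ L}) : ℝ))
          (Finset.univ.filter (fun q : Fin L.card => (q : ℕ) < k)) := by
      intro y hy
      rw [Finset.mem_filter] at hy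
      obtain ⟨hyL, hylt⟩ := hy
      obtain ⟨q, hq⟩ := (L.orderIsoOfFin rfl).surjective ⟨y, hyL⟩
      rw [Finset.mem_image]
      refine ⟨q, ?_, by rw [hq]⟩
      rw [Finset.mem_filter]
      refine ⟨Finset.mem_univ q, ?_⟩
      have : (L.orderIsoOfFin rfl q : ℝ) < (L.orderIsoOfFin rfl ⟨k, hk⟩ : ℝ) := by
        rw [hq]
        unfold tL at hylt
        rwa [dif_pos hk] at hylt
      have h3 : (L.orderIsoOfFin rfl) q < (L.orderIsoOfFin rfl) ⟨k, hk⟩ := by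
        exact_mod_cast this
      exact (L.orderIsoOfFin rfl).lt_iff_lt.mp h3
    calc (L.filter (· < tL L k)).card
        ≤ (Finset.image (fun q : Fin L.card => ((L.orderIsoOfFin rfl q : {x // x ∈ L}) : ℝ))
          (Finset.univ.filter (fun q : Fin L.card => (q : ℕ) < k))).card :=
          Finset.card_le_card this
      _ ≤ (Finset.univ.filter (fun q : Fin L.card => (q : ℕ) < k)).card :=
          Finset.card_image_le
      _ ≤ k := by
          have : (Finset.univ.filter (fun q : Fin L.card => (q : ℕ) < k))
              ⊆ Finset.image (fun j : Fin L.card => j) Finset.univ := by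
            intro q hq; simp
          calc (Finset.univ.filter (fun q : Fin L.card => (q : ℕ) < k)).card
              ≤ (Finset.range k).card := by
                refine Finset.card_le_card_of_injOn (fun q => (q : ℕ)) ?_ ?_
                · intro q hq
                  rw [Finset.mem_coe, Finset.mem_filter] at hq
                  rw [Finset.mem_coe, Finset.mem_range]
                  exact hq.2
                · intro q _ q' _ h
                  exact Fin.ext h
            _ = k := Finset.card_range k
  · -- inject range k into the filter via tL
    unfold cnt
    calc k = (Finset.range k).card := (Finset.card_range k).symm
      _ ≤ (L.filter (· < tL L k)).card := by
          refine Finset.card_le_card_of_injOn (fun q => tL L q) ?_ ?_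
          · intro q hq
            rw [Finset.mem_coe, Finset.mem_range] at hq
            rw [Finset.mem_coe, Finset.mem_filter]
            exact ⟨tL_mem (hq.trans hk), tL_lt_tL hq hk⟩
          · intro q hq q' hq' h
            rw [Finset.mem_coe, Finset.mem_range] at hq hq'
            by_contra hne
            rcases lt_or_gt_of_ne hne with hlt | hlt
            · exact absurd h (ne_of_lt (tL_lt_tL hlt (hq'.trans hk)))
            · exact absurd h.symm (ne_of_lt (tL_lt_tL hlt (hq.trans hk)))

lemma le_tL_iff {k : ℕ} (hk : k < L.card) (y : ℝ) : y ≤ tL L k ↔ cnt L y ≤ k := by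
  constructor
  · intro h
    have := cnt_mono (L := L) h
    rwa [cnt_tL hk] at this
  · intro h
    by_contra hcon
    push_neg at hcon
    have hsub : Finset.image (fun q => tL L q) (Finset.range (k + 1))
        ⊆ L.filter (· < y) := by
      intro w hw
      rw [Finset.mem_image] at hw
      obtain ⟨q, hq, rfl⟩ := hw
      rw [Finset.mem_range] at hq
      rw [Finset.mem_filter]
      have hqcard : q < L.card := by omega
      refine ⟨tL_mem hqcard, lt_of_le_of_lt (tL_le_tL (by omega) hk) hcon⟩
    have hcard : (Finset.image (fun q => tL L q) (Finset.range (k + 1))).card = k + 1 := by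
      rw [Finset.card_image_of_injOn]
      · exact Finset.card_range _
      · intro q hq q' hq' h
        rw [Finset.mem_coe, Finset.mem_range] at hq hq'
        by_contra hne
        rcases lt_or_gt_of_ne hne with hlt | hlt
        · exact absurd h (ne_of_lt (tL_lt_tL hlt (by omega)))
        · exact absurd h.symm (ne_of_lt (tL_lt_tL hlt (by omega)))
    have := Finset.card_le_card hsub
    rw [hcard] at this
    unfold cnt at h
    omega

lemma tL_cnt_self {y : ℝ} (hy : y ∈ L) : tL L (cnt L y) = y := by
  obtain ⟨k, hk, hky⟩ := tL_surj hy
  rw [← hky, cnt_tL hk]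

variable (h0 : (0:ℝ) ∈ L) (h1 : (1:ℝ) ∈ L) (hsub : ∀ y ∈ L, 0 ≤ y ∧ y ≤ 1)

include h1 hsub in
lemma cnt_le_last {y : ℝ} (hy : y ≤ 1) : cnt L y ≤ L.card - 1 := by
  unfold cnt
  have : L.filter (· < y) ⊆ L.erase 1 := by
    intro z hz
    rw [Finset.mem_filter] at hz
    rw [Finset.mem_erase]
    exact ⟨ne_of_lt (lt_of_lt_of_le hz.2 hy), hz.1⟩
  calc (L.filter (· < y)).card ≤ (L.erase 1).card := Finset.card_le_card this
    _ = L.card - 1 := Finset.card_erase_of_mem h1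

include h0 in
lemma card_posL : 0 < L.card := Finset.card_pos.mpr ⟨0, h0⟩

include h0 h1 hsub in
lemma cnt_lt_card {y : ℝ} (hy : y ≤ 1) : cnt L y < L.card := by
  have := cnt_le_last h1 hsub hy
  have := card_posL h0
  omega

include h0 h1 hsub in
lemma le_rL {y : ℝ} (hy : y ≤ 1) : y ≤ tL L (cnt L y) :=
  (le_tL_iff (cnt_lt_card h0 h1 hsub hy) y).mpr (le_refl _)

include h1 hsub in
lemma rL_min {y y' : ℝ} (hy' : y' ∈ L) (hyy' : y ≤ y') : tL L (cnt L y) ≤ y' := by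
  obtain ⟨q, hq, hqy⟩ := tL_surj hy'
  have : cnt L y ≤ q := by
    rw [← le_tL_iff hq]
    rw [hqy]
    exact hyy'
  rw [← hqy]
  exact tL_le_tL this hq

include hsub in
lemma cnt_zero : cnt L 0 = 0 := by
  unfold cnt
  rw [Finset.card_eq_zero, Finset.filter_eq_empty_iff]
  intro y hy
  exact not_lt.mpr (hsub y hy).1

include h0 hsub in
lemma tL_zero : tL L 0 = 0 := by
  have := tL_cnt_self h0
  rwa [cnt_zero hsub] at this

include h1 hsub in
lemma cnt_one : cnt L 1 = L.card - 1 := by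
  unfold cnt
  have : L.filter (· < 1) = L.erase 1 := by
    ext y
    rw [Finset.mem_filter, Finset.mem_erase]
    constructor
    · rintro ⟨hyL, hlt⟩; exact ⟨ne_of_lt hlt, hyL⟩
    · rintro ⟨hne, hyL⟩
      exact ⟨hyL, lt_of_le_of_ne (hsub y hyL).2 hne⟩
  rw [this, Finset.card_erase_of_mem h1]

include h1 hsub in
lemma tL_last : tL L (L.card - 1) = 1 := by
  have := tL_cnt_self h1
  rwa [cnt_one h1 hsub] at this

include hsub in
lemma tL_mem01 (k : ℕ) : 0 ≤ tL L k ∧ tL L k ≤ 1 := by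
  unfold tL
  by_cases h : k < L.card
  · rw [dif_pos h]
    exact hsub _ (L.orderIsoOfFin rfl ⟨k, h⟩).2
  · rw [dif_neg h]
    norm_num

end levels

end KH

namespace KH

variable {d : ℕ}

lemma qv_single_le (f : (Fin d → ℝ) → ℝ) (hbv : BddHKVar f) {S : Finset (Fin d)}
    (hS : S ∈ ((Finset.univ : Finset (Fin d)).powerset).erase ∅)
    {y : Fin d → ℝ} (hy : y ∈ Set.Icc (0 : Fin d → ℝ) 1) :
    |quasiVol f S 1 y 1| ≤ vitaliVar f S 1 0 1 := by
  classical
  set t2 : Fin d → ℕ → ℝ := fun l k => if k = 0 then 0 else if k = 1 then y l else 1 with ht2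
  have hgrid : IsGrid S 0 1 (fun _ => 2) t2 := by
    refine ⟨?_, ?_, ?_⟩
    · intro l hlS j k hjk hk2
      refine mono_of_step (M := 2) ?_ j k hjk hk2
      intro k' hk'
      interval_cases k'
      · show (if (0:ℕ) = 0 then (0:ℝ) else _) ≤ _
        simp [ht2]
        exact hy.1 l
      · show (if (1:ℕ) = 0 then (0:ℝ) else _) ≤ _
        simp [ht2]
        exact hy.2 l
    · intro l _; simp [ht2]
    · intro l _; simp [ht2]
  have hmem : (fun l => if l ∈ S then 1 else 0)
      ∈ Fintype.piFinset (fun l => if l ∈ S then Finset.range 2 else ({0} : Finset ℕ)) := by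
    rw [Fintype.mem_piFinset]
    intro l
    by_cases hl : l ∈ S <;> simp [hl]
  have hsingle : |quasiVol f S 1 y 1| ≤ cellSum f S 1 (fun _ => 2) t2 := by
    have heq : |quasiVol f S 1
        (fun v => t2 v ((fun l => if l ∈ S then 1 else 0) v))
        (fun v => t2 v ((fun l => if l ∈ S then 1 else 0) v + 1))| = |quasiVol f S 1 y 1| := by
      congr 1
      refine quasiVol_congr f (fun _ _ => rfl) (fun v hv => ?_) (fun v hv => ?_)
      · simp [ht2, hv]
      · simp [ht2, hv]
    rw [← heq]
    unfold cellSum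
    exact Finset.single_le_sum
      (f := fun k => |quasiVol f S 1 (fun v => t2 v (k v)) (fun v => t2 v (k v + 1))|)
      (fun k _ => abs_nonneg _) hmem
  exact hsingle.trans (cellSum_le_vitaliVar f S 1 0 1 hgrid (hbv S hS))

lemma f_abs_le (f : (Fin d → ℝ) → ℝ) (hbv : BddHKVar f) {y : Fin d → ℝ}
    (hy : y ∈ Set.Icc (0 : Fin d → ℝ) 1) : |f y| ≤ |f 1| + hkVar f := by
  have hrepr := sum_quasiVol_powerset f Finset.univ y 1
    (fun l hl => absurd (Finset.mem_univ l) hl)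
  rw [← hrepr]
  calc |∑ S ∈ (Finset.univ : Finset (Fin d)).powerset, (-1:ℝ) ^ S.card * quasiVol f S 1 y 1|
      ≤ ∑ S ∈ (Finset.univ : Finset (Fin d)).powerset, |(-1:ℝ) ^ S.card * quasiVol f S 1 y 1| :=
        Finset.abs_sum_le_sum_abs _ _
    _ = ∑ S ∈ (Finset.univ : Finset (Fin d)).powerset, |quasiVol f S 1 y 1| := by
        refine Finset.sum_congr rfl fun S _ => ?_
        rw [abs_mul, abs_pow, abs_neg, abs_one, one_pow, one_mul]
    _ = |quasiVol f ∅ 1 y 1|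
        + ∑ S ∈ ((Finset.univ : Finset (Fin d)).powerset).erase ∅, |quasiVol f S 1 y 1| :=
        (Finset.add_sum_erase _ _ (Finset.empty_mem_powerset _)).symm
    _ ≤ |f 1| + hkVar f := by
        refine add_le_add ?_ ?_
        · rw [quasiVol_empty]
        · unfold hkVar hkVarOn
          exact Finset.sum_le_sum fun S hS => qv_single_le f hbv hS hy

end KH

namespace KH

variable {d : ℕ}

noncomputable def Frep (f : (Fin d → ℝ) → ℝ) (L : Fin d → Finset ℝ) : (Fin d → ℝ) → ℝ :=
  fun w => ∑ S ∈ (Finset.univ : Finset (Fin d)).powerset,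
    ∑ k ∈ Fintype.piFinset
        (fun l => if l ∈ S then Finset.range ((L l).card - 1) else ({0} : Finset ℕ)),
      Set.indicator (Set.Icc 0 (fun l => if l ∈ S then tL (L l) (k l) else 1))
        (fun _ => (-1 : ℝ) ^ S.card *
          quasiVol f S 1 (fun l => tL (L l) (k l)) (fun l => tL (L l) (k l + 1))) w

lemma Frep_measurable (f : (Fin d → ℝ) → ℝ) (L : Fin d → Finset ℝ) :
    Measurable (Frep f L) := by
  unfold Frep
  refine Finset.measurable_sum _ fun S _ => ?_
  refine Finset.measurable_sum _ fun k _ => ?_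
  exact Measurable.indicator measurable_const measurableSet_Icc

lemma sum_piFinset_offS_congr (S : Finset (Fin d)) (j : Fin d → ℕ) {F G : Fin d → Finset ℕ}
    (hFS : ∀ l ∈ S, F l = G l) (hF : ∀ l ∉ S, F l = {j l}) (hG : ∀ l ∉ S, G l = {0})
    (φ ψ : (Fin d → ℕ) → ℝ) (hφ : ∀ k k', (∀ l ∈ S, k l = k' l) → φ k = ψ k') :
    ∑ k ∈ Fintype.piFinset F, φ k = ∑ k ∈ Fintype.piFinset G, ψ k := by
  classical
  refine Finset.sum_nbij' (fun k l => if l ∈ S then k l else 0)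
    (fun k l => if l ∈ S then k l else j l) ?_ ?_ ?_ ?_ ?_
  · intro k hk
    rw [Fintype.mem_piFinset] at hk ⊢
    intro l
    by_cases hl : l ∈ S
    · simp only [hl, if_true]
      rw [← hFS l hl]; exact hk l
    · simp only [hl, if_false]
      rw [hG l hl]; exact Finset.mem_singleton_self 0
  · intro k hk
    rw [Fintype.mem_piFinset] at hk ⊢
    intro l
    by_cases hl : l ∈ S
    · simp only [hl, if_true]
      rw [hFS l hl]; exact hk l
    · simp only [hl, if_false]
      rw [hF l hl]; exact Finset.mem_singleton_self (j l)
  · intro k hk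
    rw [Fintype.mem_piFinset] at hk
    funext l
    by_cases hl : l ∈ S
    · simp only [hl, if_true]
    · simp only [hl, if_false]
      have := hk l
      rw [hF l hl, Finset.mem_singleton] at this
      exact this.symm
  · intro k hk
    rw [Fintype.mem_piFinset] at hk
    funext l
    by_cases hl : l ∈ S
    · simp only [hl, if_true]
    · simp only [hl, if_false]
      have := hk l
      rw [hG l hl, Finset.mem_singleton] at this
      exact this.symm
  · intro k hk
    refine hφ _ _ fun l hl => ?_
    simp only [hl, if_true]

lemma Frep_eq_on_Icc (f : (Fin d → ℝ) → ℝ) (L : Fin d → Finset ℝ)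
    (h0 : ∀ i, (0:ℝ) ∈ L i) (h1 : ∀ i, (1:ℝ) ∈ L i)
    (hsub : ∀ i, ∀ y ∈ L i, 0 ≤ y ∧ y ≤ 1) {w : Fin d → ℝ}
    (hw : w ∈ Set.Icc (0 : Fin d → ℝ) 1) :
    Frep f L w = f (fun i => tL (L i) (cnt (L i) (w i))) := by
  classical
  have hcard : ∀ i, 0 < (L i).card := fun i => card_posL (h0 i)
  have hcnt_lt : ∀ i, cnt (L i) (w i) < (L i).card :=
    fun i => cnt_lt_card (h0 i) (h1 i) (hsub i) (hw.2 i)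
  have hcnt_le : ∀ i, cnt (L i) (w i) ≤ (L i).card - 1 :=
    fun i => cnt_le_last (h1 i) (hsub i) (hw.2 i)
  have inner_eq : ∀ S ∈ (Finset.univ : Finset (Fin d)).powerset,
      (∑ k ∈ Fintype.piFinset
          (fun l => if l ∈ S then Finset.range ((L l).card - 1) else ({0} : Finset ℕ)),
        Set.indicator (Set.Icc 0 (fun l => if l ∈ S then tL (L l) (k l) else 1))
          (fun _ => (-1 : ℝ) ^ S.card *
            quasiVol f S 1 (fun l => tL (L l) (k l)) (fun l => tL (L l) (k l + 1))) w)
      = (-1 : ℝ) ^ S.card * quasiVol f S 1 (fun i => tL (L i) (cnt (L i) (w i))) 1 := by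
    intro S _
    have hsubset : Fintype.piFinset
          (fun l => if l ∈ S then Finset.Ico (cnt (L l) (w l)) ((L l).card - 1)
            else ({0} : Finset ℕ))
        ⊆ Fintype.piFinset
          (fun l => if l ∈ S then Finset.range ((L l).card - 1) else ({0} : Finset ℕ)) := by
      refine Fintype.piFinset_subset _ _ fun l => ?_
      by_cases hl : l ∈ S
      · rw [if_pos hl, if_pos hl, Finset.range_eq_Ico]
        exact Finset.Ico_subset_Ico (Nat.zero_le _) (le_refl _)
      · rw [if_neg hl, if_neg hl]
    have hvanish : ∀ k ∈ Fintype.piFinset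
          (fun l => if l ∈ S then Finset.range ((L l).card - 1) else ({0} : Finset ℕ)),
        k ∉ Fintype.piFinset
          (fun l => if l ∈ S then Finset.Ico (cnt (L l) (w l)) ((L l).card - 1)
            else ({0} : Finset ℕ)) →
        Set.indicator (Set.Icc 0 (fun l => if l ∈ S then tL (L l) (k l) else 1))
          (fun _ => (-1 : ℝ) ^ S.card *
            quasiVol f S 1 (fun l => tL (L l) (k l)) (fun l => tL (L l) (k l + 1))) w = 0 := by
      intro k hk hknot
      rw [Fintype.mem_piFinset] at hk hknot
      push_neg at hknot
      obtain ⟨l, hl⟩ := hknot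
      by_cases hlS : l ∈ S
      · rw [if_pos hlS] at hl
        have hkr := hk l
        rw [if_pos hlS, Finset.mem_range] at hkr
        rw [Finset.mem_Ico] at hl
        push_neg at hl
        have hkl : k l < cnt (L l) (w l) := by
          by_contra hcon
          push_neg at hcon
          have := hl hcon
          omega
        have hwl : ¬ w l ≤ tL (L l) (k l) := by
          intro hcon
          have := (le_tL_iff (by omega) (w l)).mp hcon
          omega
        refine Set.indicator_of_notMem ?_ _
        intro hmem
        rw [Set.mem_Icc] at hmem
        have := hmem.2 l
        beta_reduce at this
        rw [if_pos hlS] at this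
        exact hwl this
      · rw [if_neg hlS, Finset.mem_singleton] at hl
        have hkr := hk l
        rw [if_neg hlS, Finset.mem_singleton] at hkr
        exact absurd hkr hl
    rw [← Finset.sum_subset hsubset hvanish]
    have heval : ∀ k ∈ Fintype.piFinset
          (fun l => if l ∈ S then Finset.Ico (cnt (L l) (w l)) ((L l).card - 1)
            else ({0} : Finset ℕ)),
        Set.indicator (Set.Icc 0 (fun l => if l ∈ S then tL (L l) (k l) else 1))
          (fun _ => (-1 : ℝ) ^ S.card *
            quasiVol f S 1 (fun l => tL (L l) (k l)) (fun l => tL (L l) (k l + 1))) w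
        = (-1 : ℝ) ^ S.card *
            quasiVol f S 1 (fun l => tL (L l) (k l)) (fun l => tL (L l) (k l + 1)) := by
      intro k hk
      rw [Fintype.mem_piFinset] at hk
      refine Set.indicator_of_mem ?_ _
      rw [Set.mem_Icc]
      refine ⟨hw.1, ?_⟩
      intro l
      beta_reduce
      by_cases hlS : l ∈ S
      · have hkl := hk l
        rw [if_pos hlS, Finset.mem_Ico] at hkl
        rw [if_pos hlS]
        refine (le_tL_iff (by have := hcard l; omega) (w l)).mpr hkl.1
      · rw [if_neg hlS]
        exact hw.2 l
    rw [Finset.sum_congr rfl heval, ← Finset.mul_sum]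
    congr 1
    have hsubdiv := qv_subdiv f S 1 (fun l => tL (L l)) (fun l => cnt (L l) (w l))
      (fun l => (L l).card - 1) (fun l _ => hcnt_le l)
    have hbridge : ∑ k ∈ Fintype.piFinset
          (fun l => if l ∈ S then Finset.Ico (cnt (L l) (w l)) ((L l).card - 1)
            else ({cnt (L l) (w l)} : Finset ℕ)),
          quasiVol f S 1 (fun l => tL (L l) (k l)) (fun l => tL (L l) (k l + 1))
        = ∑ k ∈ Fintype.piFinset
          (fun l => if l ∈ S then Finset.Ico (cnt (L l) (w l)) ((L l).card - 1)
            else ({0} : Finset ℕ)),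
          quasiVol f S 1 (fun l => tL (L l) (k l)) (fun l => tL (L l) (k l + 1)) := by
      refine sum_piFinset_offS_congr S (fun l => cnt (L l) (w l))
        (fun l hl => by rw [if_pos hl, if_pos hl]) (fun l hl => by rw [if_neg hl])
        (fun l hl => by rw [if_neg hl]) _ _ fun k k' hkk => ?_
      exact quasiVol_congr f (fun _ _ => rfl) (fun l hl => by rw [hkk l hl])
        (fun l hl => by rw [hkk l hl])
    rw [← hbridge, ← hsubdiv]
    refine quasiVol_congr f (fun _ _ => rfl) (fun l _ => rfl) (fun l hl => ?_)
    exact tL_last (h1 l) (hsub l)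
  unfold Frep
  rw [Finset.sum_congr rfl inner_eq]
  exact sum_quasiVol_powerset f Finset.univ _ 1 (fun l hl => absurd (Finset.mem_univ l) hl)

end KH

namespace KH

variable {d : ℕ}

lemma indicator_const_eq (s : Set (Fin d → ℝ)) (c : ℝ) (z : Fin d → ℝ) :
    Set.indicator s (fun _ => c) z = c * Set.indicator s (fun _ => (1:ℝ)) z := by
  by_cases h : z ∈ s <;> simp [h]

lemma ind_nonneg (s : Set (Fin d → ℝ)) (z : Fin d → ℝ) :
    0 ≤ Set.indicator s (fun _ => (1:ℝ)) z := by
  by_cases h : z ∈ s <;> simp [h]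

lemma ind_le_one (s : Set (Fin d → ℝ)) (z : Fin d → ℝ) :
    Set.indicator s (fun _ => (1:ℝ)) z ≤ 1 := by
  by_cases h : z ∈ s <;> simp [h]

lemma disc_le {N : ℕ} (hN : 0 < N) (x : Fin N → Fin d → ℝ) (μ : Measure (Fin d → ℝ))
    [IsProbabilityMeasure μ] {a : Fin d → ℝ} (ha : a ∈ Set.Icc (0 : Fin d → ℝ) 1) :
    |(∑ n : Fin N, Set.indicator (Set.Icc 0 a) (fun _ => (1:ℝ)) (x n)) / N
        - (μ (Set.Icc 0 a)).toReal|
      ≤ starDisc N x μ := by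
  have hNpos : (0:ℝ) < N := by exact_mod_cast hN
  have hbdd : BddAbove (Set.range (fun b : Set.Icc (0:Fin d → ℝ) 1 =>
      |(∑ n : Fin N, Set.indicator (Set.Icc 0 (b:Fin d → ℝ)) (fun _ => (1:ℝ)) (x n)) / N
        - (μ (Set.Icc 0 (b:Fin d → ℝ))).toReal|)) := by
    refine ⟨2, ?_⟩
    rintro y ⟨b, rfl⟩
    beta_reduce
    have h1 : 0 ≤ (∑ n : Fin N, Set.indicator (Set.Icc 0 (b:Fin d → ℝ)) (fun _ => (1:ℝ)) (x n)) / N :=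
      div_nonneg (Finset.sum_nonneg fun n _ => ind_nonneg _ _) (le_of_lt hNpos)
    have h2 : (∑ n : Fin N, Set.indicator (Set.Icc 0 (b:Fin d → ℝ)) (fun _ => (1:ℝ)) (x n)) / N ≤ 1 := by
      rw [div_le_one hNpos]
      calc ∑ n : Fin N, Set.indicator (Set.Icc 0 (b:Fin d → ℝ)) (fun _ => (1:ℝ)) (x n)
          ≤ ∑ _n : Fin N, (1:ℝ) := Finset.sum_le_sum fun n _ => ind_le_one _ _
        _ = N := by simp
    have h3 : (μ (Set.Icc 0 (b:Fin d → ℝ))).toReal ≤ 1 := by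
      rw [show (1:ℝ) = (1:ENNReal).toReal from ENNReal.toReal_one.symm]
      exact ENNReal.toReal_mono ENNReal.one_ne_top prob_le_one
    have h4 : (0:ℝ) ≤ (μ (Set.Icc 0 (b:Fin d → ℝ))).toReal := ENNReal.toReal_nonneg
    rw [sub_eq_add_neg]
    refine (abs_add_le _ _).trans ?_
    rw [abs_neg, abs_of_nonneg h1, abs_of_nonneg h4]
    linarith
  exact le_ciSup hbdd (⟨a, ha⟩ : Set.Icc (0:Fin d → ℝ) 1)

lemma starDisc_nonneg {N : ℕ} (hN : 0 < N) (x : Fin N → Fin d → ℝ) (μ : Measure (Fin d → ℝ))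
    [IsProbabilityMeasure μ] : 0 ≤ starDisc N x μ :=
  (abs_nonneg _).trans (disc_le hN x μ (Set.mem_Icc.mpr ⟨zero_le_one, le_refl 1⟩))

lemma Frep_bound {N : ℕ} (hN : 0 < N) (f : (Fin d → ℝ) → ℝ) (hbv : BddHKVar f)
    (μ : Measure (Fin d → ℝ)) [IsProbabilityMeasure μ]
    (hμ : μ (Set.Icc (0 : Fin d → ℝ) 1) = 1)
    (x : Fin N → Fin d → ℝ) (hx : ∀ n, x n ∈ Set.Icc (0 : Fin d → ℝ) 1)
    (L : Fin d → Finset ℝ) (h0 : ∀ i, (0:ℝ) ∈ L i) (h1 : ∀ i, (1:ℝ) ∈ L i)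
    (hsub : ∀ i, ∀ y ∈ L i, 0 ≤ y ∧ y ≤ 1) :
    |(∑ n : Fin N, Frep f L (x n)) / N - ∫ y, Frep f L y ∂μ|
      ≤ hkVar f * starDisc N x μ := by
  classical
  set c : Finset (Fin d) → (Fin d → ℕ) → ℝ := fun S k => (-1:ℝ)^S.card *
    quasiVol f S 1 (fun l => tL (L l) (k l)) (fun l => tL (L l) (k l + 1)) with hc
  set A : Finset (Fin d) → (Fin d → ℕ) → (Fin d → ℝ) :=
    fun S k l => if l ∈ S then tL (L l) (k l) else 1 with hA
  set K : Finset (Fin d) → Finset (Fin d → ℕ) := fun S => Fintype.piFinset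
    (fun l => if l ∈ S then Finset.range ((L l).card - 1) else ({0} : Finset ℕ)) with hK
  set E1 : (Fin d → ℝ) → ℝ := fun a =>
    (∑ n : Fin N, Set.indicator (Set.Icc 0 a) (fun _ => (1:ℝ)) (x n)) / N
      - (μ (Set.Icc 0 a)).toReal with hE1
  have hA_mem : ∀ S k, A S k ∈ Set.Icc (0 : Fin d → ℝ) 1 := by
    intro S k
    rw [Set.mem_Icc]
    constructor
    · intro l
      rw [hA]
      by_cases hl : l ∈ S
      · simp only [hl, if_true]
        exact (tL_mem01 (hsub l) (k l)).1
      · simp only [hl, if_false]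
        norm_num
    · intro l
      rw [hA]
      by_cases hl : l ∈ S
      · simp only [hl, if_true]
        exact (tL_mem01 (hsub l) (k l)).2
      · simp [hl]
  -- integral computation
  have hInt : ∫ y, Frep f L y ∂μ = ∑ S ∈ (Finset.univ : Finset (Fin d)).powerset,
      ∑ k ∈ K S, c S k * (μ (Set.Icc 0 (A S k))).toReal := by
    unfold Frep
    rw [MeasureTheory.integral_finset_sum _ (fun S _ =>
      MeasureTheory.integrable_finset_sum _ (fun k _ =>
        (MeasureTheory.integrable_const _).indicator measurableSet_Icc))]
    refine Finset.sum_congr rfl fun S _ => ?_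
    rw [MeasureTheory.integral_finset_sum _ (fun k _ =>
      (MeasureTheory.integrable_const _).indicator measurableSet_Icc)]
    refine Finset.sum_congr rfl fun k _ => ?_
    rw [MeasureTheory.integral_indicator_const _ measurableSet_Icc, smul_eq_mul, mul_comm]
    rfl
  -- empirical computation
  have hEmp : (∑ n : Fin N, Frep f L (x n)) = ∑ S ∈ (Finset.univ : Finset (Fin d)).powerset,
      ∑ k ∈ K S, c S k *
        (∑ n : Fin N, Set.indicator (Set.Icc 0 (A S k)) (fun _ => (1:ℝ)) (x n)) := by
    unfold Frep
    rw [Finset.sum_comm]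
    refine Finset.sum_congr rfl fun S _ => ?_
    rw [Finset.sum_comm]
    refine Finset.sum_congr rfl fun k _ => ?_
    rw [Finset.mul_sum]
    refine Finset.sum_congr rfl fun n _ => ?_
    exact indicator_const_eq _ _ _
  have hdiff : (∑ n : Fin N, Frep f L (x n)) / N - ∫ y, Frep f L y ∂μ
      = ∑ S ∈ (Finset.univ : Finset (Fin d)).powerset, ∑ k ∈ K S, c S k * E1 (A S k) := by
    rw [hEmp, hInt, Finset.sum_div, ← Finset.sum_sub_distrib]
    refine Finset.sum_congr rfl fun S _ => ?_
    rw [Finset.sum_div, ← Finset.sum_sub_distrib]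
    refine Finset.sum_congr rfl fun k _ => ?_
    rw [hE1]
    ring
  -- the empty set term vanishes
  have hempty : ∑ k ∈ K ∅, c ∅ k * E1 (A ∅ k) = 0 := by
    have hKe : K ∅ = {fun _ => (0:ℕ)} := by
      rw [hK]
      have : (fun l => if l ∈ (∅ : Finset (Fin d)) then Finset.range ((L l).card - 1)
          else ({0} : Finset ℕ)) = fun l => ({0} : Finset ℕ) := by
        funext l; simp
      beta_reduce
      rw [this]
      exact piFinset_singleton_eq (fun _ => 0)
    rw [hKe, Finset.sum_singleton]
    have hAe : A ∅ (fun _ => 0) = 1 := by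
      funext l
      rw [hA]
      simp
    rw [hAe]
    have hval : E1 1 = 0 := by
      rw [hE1]
      beta_reduce
      have hind : ∀ n : Fin N, Set.indicator (Set.Icc (0:Fin d → ℝ) 1) (fun _ => (1:ℝ)) (x n) = 1 :=
        fun n => Set.indicator_of_mem (hx n) _
      rw [Finset.sum_congr rfl fun n _ => hind n]
      rw [Finset.sum_const, Finset.card_univ, Fintype.card_fin, hμ, ENNReal.toReal_one]
      rw [nsmul_eq_mul, mul_one, div_self (by exact_mod_cast hN.ne')]
      ring
    rw [hval, mul_zero]
  -- bound the rest
  have hrest : |∑ S ∈ ((Finset.univ : Finset (Fin d)).powerset).erase ∅,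
      ∑ k ∈ K S, c S k * E1 (A S k)| ≤ hkVar f * starDisc N x μ := by
    refine (Finset.abs_sum_le_sum_abs _ _).trans ?_
    have hper : ∀ S ∈ ((Finset.univ : Finset (Fin d)).powerset).erase ∅,
        |∑ k ∈ K S, c S k * E1 (A S k)| ≤ vitaliVar f S 1 0 1 * starDisc N x μ := by
      intro S hS
      refine (Finset.abs_sum_le_sum_abs _ _).trans ?_
      have hterm : ∀ k ∈ K S, |c S k * E1 (A S k)|
          ≤ |quasiVol f S 1 (fun l => tL (L l) (k l)) (fun l => tL (L l) (k l + 1))|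
              * starDisc N x μ := by
        intro k _
        rw [abs_mul, hc]
        rw [abs_mul, abs_pow, abs_neg, abs_one, one_pow, one_mul]
        refine mul_le_mul_of_nonneg_left ?_ (abs_nonneg _)
        exact disc_le hN x μ (hA_mem S k)
      refine (Finset.sum_le_sum hterm).trans ?_
      rw [← Finset.sum_mul]
      refine mul_le_mul_of_nonneg_right ?_ (starDisc_nonneg hN x μ)
      have hcell : ∑ k ∈ K S,
          |quasiVol f S 1 (fun l => tL (L l) (k l)) (fun l => tL (L l) (k l + 1))|
          = cellSum f S 1 (fun l => (L l).card - 1) (fun l => tL (L l)) := rfl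
      rw [hcell]
      refine cellSum_le_vitaliVar f S 1 0 1 ?_ (hbv S hS)
      refine ⟨?_, ?_, ?_⟩
      · intro i _ j k hjk hk
        have hcard := card_posL (h0 i)
        have hk2 : k ≤ (L i).card - 1 := hk
        exact tL_le_tL hjk (by omega)
      · intro i _
        exact tL_zero (h0 i) (hsub i)
      · intro i _
        exact tL_last (h1 i) (hsub i)
    refine (Finset.sum_le_sum hper).trans ?_
    rw [← Finset.sum_mul]
    unfold hkVar hkVarOn
    exact le_refl _
  rw [hdiff, ← Finset.add_sum_erase _ _ (Finset.empty_mem_powerset _), hempty, zero_add]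
  exact hrest

end KH

open KH in
/-- Generalized Koksma–Hlawka inequality for arbitrary normalized Borel measures. -/
theorem stmt0 {d N : ℕ} (hN : 0 < N) (f : (Fin d → ℝ) → ℝ) (hmeas : Measurable f)
    (hbv : BddHKVar f) (μ : Measure (Fin d → ℝ)) [IsProbabilityMeasure μ]
    (hμ : μ (Set.Icc (0 : Fin d → ℝ) 1) = 1)
    (x : Fin N → Fin d → ℝ) (hx : ∀ n, x n ∈ Set.Icc (0 : Fin d → ℝ) 1) :
    |(∑ n : Fin N, f (x n)) / N - ∫ y, f y ∂μ| ≤ hkVar f * starDisc N x μ := by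
  classical
  have hDcount : ∀ i : Fin d, ∃ e : ℕ → ℝ,
      insert (0:ℝ) {c : ℝ | ¬ContinuousAt (gfun f i) c} = Set.range e := by
    intro i
    refine Set.Countable.exists_eq_range ?_ ⟨0, Set.mem_insert 0 _⟩
    exact Set.Countable.insert 0 ((gfun_monotone f hbv i).countable_not_continuousAt)
  choose e he using hDcount
  set L : ℕ → Fin d → Finset ℝ := fun n i =>
    insert 0 (insert 1 (((Finset.image (fun j : ℕ => (j:ℝ)/2^n) (Finset.range (2^n+1))
      ∪ Finset.image (e i) (Finset.range n))
      ∪ Finset.image (fun q : Fin N => x q i) Finset.univ).filter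
        (fun y => 0 ≤ y ∧ y ≤ 1))) with hL
  have h0 : ∀ n i, (0:ℝ) ∈ L n i := fun n i => Finset.mem_insert_self 0 _
  have h1 : ∀ n i, (1:ℝ) ∈ L n i :=
    fun n i => Finset.mem_insert_of_mem (Finset.mem_insert_self 1 _)
  have hsubL : ∀ n i, ∀ y ∈ L n i, 0 ≤ y ∧ y ≤ 1 := by
    intro n i y hy
    rcases Finset.mem_insert.mp hy with rfl | hy
    · norm_num
    rcases Finset.mem_insert.mp hy with rfl | hy
    · norm_num
    exact (Finset.mem_filter.mp hy).2
  have hxL : ∀ n q i, x q i ∈ L n i := by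
    intro n q i
    refine Finset.mem_insert_of_mem (Finset.mem_insert_of_mem ?_)
    rw [Finset.mem_filter]
    exact ⟨Finset.mem_union_right _ (Finset.mem_image_of_mem _ (Finset.mem_univ q)),
      ⟨(hx q).1 i, (hx q).2 i⟩⟩
  have heL : ∀ (i : Fin d) (q n : ℕ), q < n → 0 ≤ e i q → e i q ≤ 1 → e i q ∈ L n i := by
    intro i q n hqn hq0 hq1
    refine Finset.mem_insert_of_mem (Finset.mem_insert_of_mem ?_)
    rw [Finset.mem_filter]
    refine ⟨Finset.mem_union_left _ (Finset.mem_union_right _ ?_), hq0, hq1⟩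
    exact Finset.mem_image_of_mem _ (Finset.mem_range.mpr hqn)
  have huniformL : ∀ (n : ℕ) (i : Fin d) (cc : ℝ), 0 ≤ cc → cc ≤ 1 →
      ∃ y ∈ L n i, cc ≤ y ∧ y ≤ cc + (1/2)^n := by
    intro n i cc hc0 hc1
    have hpow : (0:ℝ) < 2^n := by positivity
    set j := ⌈cc * 2^n⌉₊ with hj
    have hjn : j ≤ 2^n := by
      rw [hj, Nat.ceil_le]
      push_cast
      nlinarith
    have hceil1 : cc * 2^n ≤ (j:ℝ) := Nat.le_ceil _
    have hceil2 : (j:ℝ) < cc * 2^n + 1 := Nat.ceil_lt_add_one (by positivity)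
    refine ⟨(j:ℝ)/2^n, ?_, ?_, ?_⟩
    · refine Finset.mem_insert_of_mem (Finset.mem_insert_of_mem ?_)
      rw [Finset.mem_filter]
      refine ⟨Finset.mem_union_left _ (Finset.mem_union_left _ ?_), ?_, ?_⟩
      · exact Finset.mem_image_of_mem _ (Finset.mem_range.mpr (by omega))
      · positivity
      · rw [div_le_one hpow]
        exact_mod_cast Nat.cast_le.mpr hjn
    · rw [le_div_iff₀ hpow]
      exact hceil1
    · rw [div_le_iff₀ hpow]
      have h1pow : (1/2:ℝ)^n * 2^n = 1 := by
        rw [← mul_pow]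
        norm_num
      nlinarith
  -- empirical equality
  have hempir : ∀ n q, Frep f (L n) (x q) = f (x q) := by
    intro n q
    rw [Frep_eq_on_Icc f (L n) (h0 n) (h1 n) (hsubL n) (hx q)]
    congr 1
    funext i
    exact tL_cnt_self (hxL n q i)
  -- pointwise convergence on the cube
  have hconv : ∀ w ∈ Set.Icc (0:Fin d → ℝ) 1,
      Filter.Tendsto (fun n => Frep f (L n) w) Filter.atTop (nhds (f w)) := by
    intro w hw
    have hFr : ∀ n, Frep f (L n) w = f (fun i => tL (L n i) (cnt (L n i) (w i))) :=
      fun n => Frep_eq_on_Icc f (L n) (h0 n) (h1 n) (hsubL n) hw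
    have hr_mem : ∀ n, (fun i => tL (L n i) (cnt (L n i) (w i))) ∈ Set.Icc (0:Fin d → ℝ) 1 :=
      fun n => ⟨fun i => (tL_mem01 (hsubL n i) _).1, fun i => (tL_mem01 (hsubL n i) _).2⟩
    have hwr : ∀ n, w ≤ (fun i => tL (L n i) (cnt (L n i) (w i))) :=
      fun n i => le_rL (h0 n i) (h1 n i) (hsubL n i) (hw.2 i)
    have hbnd : ∀ n, |f (fun i => tL (L n i) (cnt (L n i) (w i))) - f w|
        ≤ ∑ i : Fin d, (gfun f i (tL (L n i) (cnt (L n i) (w i))) - gfun f i (w i)) := by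
      intro n
      have := f_diff_bound f hbv Finset.univ w (fun i => tL (L n i) (cnt (L n i) (w i)))
        hw (hr_mem n) (hwr n) (fun l hl => absurd (Finset.mem_univ l) hl)
      exact this
    have hcoord : ∀ i : Fin d,
        Filter.Tendsto (fun n => gfun f i (tL (L n i) (cnt (L n i) (w i))))
          Filter.atTop (nhds (gfun f i (w i))) := by
      intro i
      by_cases hbad : w i ∈ Set.range (e i)
      · obtain ⟨q, hq⟩ := hbad
        have hev : ∀ n, n ≥ q + 1 → tL (L n i) (cnt (L n i) (w i)) = w i := by
          intro n hn
          refine tL_cnt_self ?_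
          rw [← hq]
          exact heL i q n (by omega) (hq ▸ hw.1 i) (hq ▸ hw.2 i)
        have hevq : (fun n => gfun f i (w i)) =ᶠ[Filter.atTop]
            (fun n => gfun f i (tL (L n i) (cnt (L n i) (w i)))) :=
          Filter.eventually_atTop.mpr ⟨q+1, fun n hn => by beta_reduce; rw [hev n hn]⟩
        exact Filter.Tendsto.congr' hevq tendsto_const_nhds
      · have hcont : ContinuousAt (gfun f i) (w i) := by
          by_contra hcon
          refine hbad ?_
          rw [← he i]
          exact Set.mem_insert_of_mem _ hcon
        have hupper : ∀ n, tL (L n i) (cnt (L n i) (w i)) ≤ w i + (1/2)^n := by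
          intro n
          obtain ⟨y, hyL, hy1, hy2⟩ := huniformL n i (w i) (hw.1 i) (hw.2 i)
          exact (rL_min (h1 n i) (hsubL n i) hyL hy1).trans hy2
        have hrw : Filter.Tendsto (fun n => tL (L n i) (cnt (L n i) (w i)))
            Filter.atTop (nhds (w i)) := by
          have htop : Filter.Tendsto (fun n : ℕ => w i + (1/2:ℝ)^n) Filter.atTop
              (nhds (w i)) := by
            have := tendsto_pow_atTop_nhds_zero_of_lt_one
              (show (0:ℝ) ≤ 1/2 by norm_num) (show (1/2:ℝ) < 1 by norm_num)
            have h2 := Filter.Tendsto.const_add (w i) this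
            simpa using h2
          exact tendsto_of_tendsto_of_tendsto_of_le_of_le tendsto_const_nhds htop
            (fun n => hwr n i) hupper
        exact (hcont.tendsto).comp hrw
    have hsum0 : Filter.Tendsto
        (fun n => ∑ i : Fin d, (gfun f i (tL (L n i) (cnt (L n i) (w i))) - gfun f i (w i)))
        Filter.atTop (nhds 0) := by
      have := tendsto_finset_sum (Finset.univ : Finset (Fin d))
        (fun i _ => (hcoord i).sub (tendsto_const_nhds
          (x := gfun f i (w i)) (f := Filter.atTop (α := ℕ))))
      simpa using this
    have habs : Filter.Tendsto (fun n => |Frep f (L n) w - f w|) Filter.atTop (nhds 0) := by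
      refine squeeze_zero (fun n => abs_nonneg _) (fun n => ?_) hsum0
      rw [hFr n]
      exact hbnd n
    rw [tendsto_iff_dist_tendsto_zero]
    simpa [Real.dist_eq] using habs
  -- almost everywhere in the cube
  have hIccae : ∀ᵐ w ∂μ, w ∈ Set.Icc (0:Fin d → ℝ) 1 := by
    have hcompl : μ (Set.Icc (0:Fin d → ℝ) 1)ᶜ = 0 := by
      have := measure_compl (measurableSet_Icc (a := (0:Fin d → ℝ)) (b := 1))
        (measure_ne_top μ _)
      rw [hμ, measure_univ] at this
      simpa using this
    rw [MeasureTheory.ae_iff]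
    exact hcompl
  -- integral convergence
  have hintconv : Filter.Tendsto (fun n => ∫ y, Frep f (L n) y ∂μ) Filter.atTop
      (nhds (∫ y, f y ∂μ)) := by
    refine MeasureTheory.tendsto_integral_of_dominated_convergence
      (fun _ => |f 1| + hkVar f)
      (fun n => (Frep_measurable f (L n)).aestronglyMeasurable)
      (MeasureTheory.integrable_const _) ?_ ?_
    · intro n
      filter_upwards [hIccae] with w hw
      rw [Real.norm_eq_abs, Frep_eq_on_Icc f (L n) (h0 n) (h1 n) (hsubL n) hw]
      exact f_abs_le f hbv ⟨fun i => (tL_mem01 (hsubL n i) _).1,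
        fun i => (tL_mem01 (hsubL n i) _).2⟩
    · filter_upwards [hIccae] with w hw
      exact hconv w hw
  -- per-level bound
  have hbound : ∀ n, |(∑ q : Fin N, f (x q)) / N - ∫ y, Frep f (L n) y ∂μ|
      ≤ hkVar f * starDisc N x μ := by
    intro n
    have hb := Frep_bound hN f hbv μ hμ x hx (L n) (h0 n) (h1 n) (hsubL n)
    rw [Finset.sum_congr rfl (fun q _ => hempir n q)] at hb
    exact hb
  -- pass to the limit
  have hlim : Filter.Tendsto (fun n => |(∑ q : Fin N, f (x q)) / N - ∫ y, Frep f (L n) y ∂μ|)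
      Filter.atTop (nhds |(∑ q : Fin N, f (x q)) / N - ∫ y, f y ∂μ|) :=
    (Filter.Tendsto.sub tendsto_const_nhds hintconv).abs
  exact le_of_tendsto hlim (Filter.Eventually.of_forall hbound)
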